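/- arXiv:1906.07430 — 3 statements merged into one kernel-verified Lean document; each statement's English description precedes it below -/
import Mathlib

section
/- If an undirected binary phylogenetic network N with distinguished edge e_ρ and reticulation set R is orientable, then the graph N − R obtained by deleting all vertices of R (and their incident edges) from N is a forest. -/
open Classical

/-- Indegree of a vertex in a digraph given by a relation. -/
noncomputable def inDeg {W : Type} (D : W → W → Prop) (b : W) : ℕ :=
  Nat.card {a : W // D a b}

/-- Outdegree of a vertex in a digraph given by a relation. -/
noncomputable def outDeg {W : Type} (D : W → W → Prop) (a : W) : ℕ :=
  Nat.card {b : W // D a b}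

/-- A digraph is acyclic if it has no directed cycle. -/
def DigraphAcyclic {W : Type} (D : W → W → Prop) : Prop :=
  ∀ a : W, ¬ Relation.TransGen D a a

/-- `D` is an orientation of the undirected graph `H`: every arc of `D` lies on an
edge of `H`, and every edge of `H` is given exactly one direction. -/
def IsOrientationOf {W : Type} (H : SimpleGraph W) (D : W → W → Prop) : Prop :=
  (∀ a b, D a b → H.Adj a b) ∧ (∀ a b, H.Adj a b → (D a b ↔ ¬ D b a))

/-- The graph obtained from `G` by subdividing the edge `{u,v}` with a new vertex
(represented by `none`). -/
def subdivide {V : Type} (G : SimpleGraph V) (u v : V) : SimpleGraph (Option V) where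
  Adj a b := match a, b with
    | some a', some b' => G.Adj a' b' ∧ ¬ (s(a', b') = s(u, v))
    | some a', none => a' = u ∨ a' = v
    | none, some b' => b' = u ∨ b' = v
    | none, none => False
  symm := by
    constructor
    intro a b h
    match a, b with
    | some a', some b' =>
        exact ⟨h.1.symm, fun he => h.2 (by rwa [Sym2.eq_swap] at he)⟩
    | some a', none => exact h
    | none, some b' => exact h
  loopless := by
    constructor
    intro a h
    match a with
    | some a' => exact G.ne_of_adj h.1 rfl
    | none => exact h

/-- An undirected binary phylogenetic network: a connected graph in which every
vertex has degree `1` (a leaf) or degree `3`. -/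
def IsUndirBinNet {V : Type} [Fintype V] (G : SimpleGraph V) [DecidableRel G.Adj] : Prop :=
  G.Connected ∧ ∀ w : V, G.degree w = 1 ∨ G.degree w = 3

/-- An orientation of the binary network `G` with root subdividing the edge `{u,v}`
and reticulation set `R`: an acyclic orientation of the subdivided graph in which
the root has indegree `0`, the vertices of `R` have indegree `2` and all other
vertices have indegree `1`. -/
def IsBinOrientation {V : Type} [Fintype V] (G : SimpleGraph V) (u v : V) (R : Set V)
    (D : Option V → Option V → Prop) : Prop :=
  IsOrientationOf (subdivide G u v) D ∧ DigraphAcyclic D ∧ inDeg D none = 0 ∧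
    ∀ w : V, (w ∈ R ↔ inDeg D (some w) = 2) ∧ (w ∉ R → inDeg D (some w) = 1)




private lemma exists_dart_fst' {V : Type} {G : SimpleGraph V} {b : V} :
    ∀ {s t : V} (p : G.Walk s t), b ∈ p.support → b ≠ t →
      ∃ d ∈ p.darts, d.toProd.1 = b := by
  intro s t p
  induction p with
  | nil => intro hb hbt; simp at hb; exact absurd hb hbt
  | @cons s w t h q ih =>
    intro hb hbt
    rw [SimpleGraph.Walk.support_cons, List.mem_cons] at hb
    rcases hb with rfl | hb
    · exact ⟨⟨(b, w), h⟩, by simp [SimpleGraph.Walk.darts_cons], rfl⟩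
    · obtain ⟨d, hd, hdb⟩ := ih hb hbt
      exact ⟨d, by simp [SimpleGraph.Walk.darts_cons, hd], hdb⟩

private lemma closed_dart_fst {V : Type} {G : SimpleGraph V} {a b : V}
    (p : G.Walk a a) (hp : ¬ p.Nil) (hb : b ∈ p.support) :
    ∃ d ∈ p.darts, d.toProd.1 = b := by
  by_cases hba : b = a
  · subst hba
    obtain ⟨w, h, q, rfl⟩ := SimpleGraph.Walk.not_nil_iff.mp hp
    exact ⟨⟨(b, w), h⟩, by simp [SimpleGraph.Walk.darts_cons], rfl⟩
  · exact exists_dart_fst' p hb hba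

private lemma closed_dart_snd {V : Type} {G : SimpleGraph V} {a b : V}
    (p : G.Walk a a) (hp : ¬ p.Nil) (hb : b ∈ p.support) :
    ∃ d ∈ p.darts, d.toProd.2 = b := by
  have hp' : ¬ p.reverse.Nil := by
    rw [SimpleGraph.Walk.not_nil_iff_lt_length] at hp ⊢
    simpa using hp
  have hb' : b ∈ p.reverse.support := by
    rw [SimpleGraph.Walk.support_reverse, List.mem_reverse]; exact hb
  obtain ⟨d, hd, hdb⟩ := closed_dart_fst p.reverse hp' hb'
  refine ⟨d.symm, SimpleGraph.Walk.mem_darts_reverse.mp ?_, hdb⟩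
  simpa [SimpleGraph.Dart.symm_symm] using hd

/-- If `(N, e_ρ, R)` is orientable, then `N − R` (the induced subgraph on the
complement of `R`) is a forest. -/
theorem forest_of_orientable {V X : Type} [Fintype V] [DecidableEq V]
    (G : SimpleGraph V) [DecidableRel G.Adj] (hnet : IsUndirBinNet G)
    (labels : X ≃ {w : V // G.degree w = 1})
    (u v : V) (he : G.Adj u v) (R : Set V)
    (hor : ∃ D : Option V → Option V → Prop, IsBinOrientation G u v R D) :
    (G.induce (Rᶜ : Set V)).IsAcyclic := by
  obtain ⟨D, ⟨hD1, hD2⟩, hac, hroot, hdeg⟩ := hor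
  -- nothing points into the root
  have hnone : ∀ z : Option V, ¬ D z none := by
    intro z hz
    have hpos : 0 < Nat.card {a : Option V // D a none} := by
      haveI : Nonempty {a : Option V // D a none} := ⟨⟨z, hz⟩⟩
      exact Nat.card_pos
    rw [show Nat.card {a : Option V // D a none} = inDeg D none from rfl, hroot] at hpos
    exact lt_irrefl 0 hpos
  -- the root points to u and v
  have hsub_none : ∀ w : V, (w = u ∨ w = v) → D none (some w) := by
    intro w hw
    have hadj : (subdivide G u v).Adj none (some w) := hw
    exact (hD2 none (some w) hadj).mpr (hnone (some w))
  -- a vertex outside R cannot have two distinct in-neighbours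
  have htwo : ∀ w : V, w ∉ R → ∀ y z : Option V, y ≠ z →
      D y (some w) → D z (some w) → False := by
    intro w hw y z hyz hy hz
    have h1 : inDeg D (some w) = 1 := (hdeg w).2 hw
    have hlt : 1 < Nat.card {a : Option V // D a (some w)} :=
      Finite.one_lt_card_iff_nontrivial.mpr
        ⟨⟨y, hy⟩, ⟨z, hz⟩, fun hcn => hyz (congrArg Subtype.val hcn)⟩
    rw [show Nat.card {a : Option V // D a (some w)} = inDeg D (some w) from rfl, h1] at hlt
    exact lt_irrefl 1 hlt
  -- every non-subdivided edge is oriented one way or the other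
  have hgen : ∀ a b : V, G.Adj a b → ¬ s(a, b) = s(u, v) →
      D (some a) (some b) ∨ D (some b) (some a) := by
    intro a b hab hne
    have hadj : (subdivide G u v).Adj (some a) (some b) := ⟨hab, hne⟩
    by_cases h : D (some b) (some a)
    · exact Or.inr h
    · exact Or.inl ((hD2 (some a) (some b) hadj).mpr h)
  intro a c hc
  -- pick a maximal (w.r.t. the transitive closure of D) vertex on the cycle
  set S : Set (Option V) :=
    {z | ∃ t : (Rᶜ : Set V), t ∈ c.support ∧ z = some (t : V)} with hSdef
  haveI : IsTrans (Option V) (fun p q => Relation.TransGen D q p) :=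
    ⟨fun _ _ _ hab hbc => hbc.trans hab⟩
  haveI : IsIrrefl (Option V) (fun p q => Relation.TransGen D q p) :=
    ⟨fun x h => hac x h⟩
  obtain ⟨m, hmS, hmax⟩ :=
    (Finite.wellFounded_of_trans_of_irrefl
      (fun p q : Option V => Relation.TransGen D q p)).has_min S
      ⟨some (a : V), a, c.start_mem_support, rfl⟩
  obtain ⟨b, hbsup, rfl⟩ := hmS
  have hmax' : ∀ t : (Rᶜ : Set V), t ∈ c.support → ¬ D (some (b : V)) (some (t : V)) := by
    intro t ht hd
    exact hmax (some (t : V)) ⟨t, ht, rfl⟩ (Relation.TransGen.single hd)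
  have hbR : (b : V) ∉ R := b.2
  -- the two darts of the cycle at b
  obtain ⟨d₁, hd₁, hd₁b⟩ := closed_dart_fst c hc.not_nil hbsup
  obtain ⟨d₂, hd₂, hd₂b⟩ := closed_dart_snd c hc.not_nil hbsup
  set x := d₁.toProd.2 with hxdef
  set y := d₂.toProd.1 with hydef
  have hax : (G.induce (Rᶜ : Set V)).Adj b x := by
    have := d₁.adj; rwa [show d₁.toProd.1 = b from hd₁b] at this
  have hay : (G.induce (Rᶜ : Set V)).Adj y b := by
    have := d₂.adj; rwa [show d₂.toProd.2 = b from hd₂b] at this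
  have hgax : G.Adj (b : V) (x : V) := hax
  have hgay : G.Adj (y : V) (b : V) := hay
  have hxsup : x ∈ c.support := c.dart_snd_mem_support_of_mem_darts hd₁
  have hysup : y ∈ c.support := SimpleGraph.Walk.dart_fst_mem_support_of_mem_darts c hd₂
  have hdne : d₁ ≠ d₂ := by
    intro h
    apply hax.ne'
    rw [hxdef, h]
    exact hd₂b
  have hedge : d₁.edge ≠ d₂.edge := by
    intro h
    exact hdne (List.inj_on_of_nodup_map
      (show (c.darts.map SimpleGraph.Dart.edge).Nodup from hc.edges_nodup) hd₁ hd₂ h)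
  have hedge' : ¬ (s(b, x) : Sym2 (Rᶜ : Set V)) = s(y, b) := by
    intro h
    apply hedge
    have e1 : d₁.edge = s(b, x) := by
      rw [← hd₁b]; rfl
    have e2 : d₂.edge = s(y, b) := by
      rw [← hd₂b]; rfl
    rw [e1, e2, h]
  have hxy : x ≠ y := by
    intro h
    exact hedge' (by rw [h, Sym2.eq_swap])
  have hxyV : (x : V) ≠ (y : V) := fun h => hxy (Subtype.ext h)
  have hsomexy : (some (x : V) : Option V) ≠ some (y : V) :=
    fun h => hxyV (Option.some.inj h)
  by_cases h1 : s((b : V), (x : V)) = s(u, v)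
  · -- the edge {b,x} is the subdivided edge, so the root points to b
    have hDnB : D none (some (b : V)) := by
      rcases Sym2.eq_iff.mp h1 with ⟨hbu, -⟩ | ⟨hbv, -⟩
      · exact hsub_none _ (Or.inl hbu)
      · exact hsub_none _ (Or.inr hbv)
    have h2 : ¬ s((y : V), (b : V)) = s(u, v) := by
      intro h2
      have h3 : s((b : V), (x : V)) = s((y : V), (b : V)) := h1.trans h2.symm
      rcases Sym2.eq_iff.mp h3 with ⟨-, hxb⟩ | ⟨-, hxy'⟩
      · exact hgax.ne hxb.symm
      · exact hxyV hxy'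
    rcases hgen (y : V) (b : V) hgay h2 with hYB | hBY
    · exact htwo (b : V) hbR (some (y : V)) none (by simp) hYB hDnB
    · exact hmax' y hysup hBY
  · rcases hgen (b : V) (x : V) hgax h1 with hBX | hXB
    · exact hmax' x hxsup hBX
    · by_cases h2 : s((y : V), (b : V)) = s(u, v)
      · have hDnB : D none (some (b : V)) := by
          rcases Sym2.eq_iff.mp h2 with ⟨-, hbv⟩ | ⟨-, hbu⟩
          · exact hsub_none _ (Or.inr hbv)
          · exact hsub_none _ (Or.inl hbu)
        exact htwo (b : V) hbR (some (x : V)) none (by simp) hXB hDnB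
      · rcases hgen (y : V) (b : V) hgay h2 with hYB | hBY
        · exact htwo (b : V) hbR (some (x : V)) (some (y : V)) hsomexy hXB hYB
        · exact hmax' y hysup hBY
end

section
/- Every binary orchard network is tree-based. -/
open Classical

variable {A : Type} [DecidableEq A]

/-- The vertex set of a digraph given by a finite set of arcs. -/
def verts (E : Finset (A × A)) : Finset A :=
  E.image Prod.fst ∪ E.image Prod.snd

/-- Outdegree of `a` in the arc set `E`. -/
def odeg (E : Finset (A × A)) (a : A) : ℕ := (E.filter fun p => p.1 = a).card

/-- Indegree of `a` in the arc set `E`. -/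
def ideg (E : Finset (A × A)) (a : A) : ℕ := (E.filter fun p => p.2 = a).card

/-- The arc relation of `E`. -/
def Arc (E : Finset (A × A)) (a b : A) : Prop := (a, b) ∈ E

/-- `a` is a leaf of `E`: indegree `1` and outdegree `0`. -/
def IsLeafV (E : Finset (A × A)) (a : A) : Prop :=
  a ∈ verts E ∧ ideg E a = 1 ∧ odeg E a = 0

/-- A directed binary phylogenetic network (leaves labelled by themselves):
an acyclic digraph with a unique root of indegree `0` and outdegree `2`, in which
every other vertex is a leaf (indegree `1`, outdegree `0`), a tree vertex
(indegree `1`, outdegree `2`) or a reticulation (indegree `2`, outdegree `1`). -/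
def IsDirBinNet (E : Finset (A × A)) : Prop :=
  (∀ a : A, ¬ Relation.TransGen (Arc E) a a) ∧
  (∃! r : A, r ∈ verts E ∧ ideg E r = 0) ∧
  (∀ a ∈ verts E,
      (ideg E a = 0 ∧ odeg E a = 2) ∨ (ideg E a = 1 ∧ odeg E a = 0) ∨
      (ideg E a = 1 ∧ odeg E a = 2) ∨ (ideg E a = 2 ∧ odeg E a = 1))

/-- Picking a cherry `{x,y}`: delete the leaf `y` and suppress its parent `p`
(with grandparent `g`). -/
def PickCherry (E E' : Finset (A × A)) : Prop :=
  ∃ x y p g : A, x ≠ y ∧ IsLeafV E x ∧ IsLeafV E y ∧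
    (p, x) ∈ E ∧ (p, y) ∈ E ∧ (g, p) ∈ E ∧
    E' = insert (g, x) (((E.erase (p, x)).erase (p, y)).erase (g, p))

/-- Picking a reticulated cherry on leaves `x, y`: the parent `v` of `x` is a
reticulation, the parent `u` of `y` is a tree vertex with arc `(u,v)`; delete the
arc `(u,v)` and suppress `u` and `v` (with `g` the parent of `u` and `w` the
other parent of `v`). -/
def PickRetCherry (E E' : Finset (A × A)) : Prop :=
  ∃ x y u v g w : A, IsLeafV E x ∧ IsLeafV E y ∧
    (v, x) ∈ E ∧ (u, y) ∈ E ∧ (u, v) ∈ E ∧ (w, v) ∈ E ∧ w ≠ u ∧ (g, u) ∈ E ∧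
    ideg E v = 2 ∧ odeg E v = 1 ∧ ideg E u = 1 ∧ odeg E u = 2 ∧
    E' = insert (w, x) (insert (g, y)
      (((((E.erase (u, v)).erase (w, v)).erase (v, x)).erase (g, u)).erase (u, y)))

/-- One picking step: a cherry or a reticulated cherry is picked. -/
def PickStep (E E' : Finset (A × A)) : Prop := PickCherry E E' ∨ PickRetCherry E E'

/-- A single cherry: a root with exactly two leaf children. -/
def IsSingleCherry (E : Finset (A × A)) : Prop :=
  ∃ r x y : A, r ≠ x ∧ r ≠ y ∧ x ≠ y ∧ E = {(r, x), (r, y)}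

/-- An orchard network: reducible to a single cherry by picking cherries and
reticulated cherries. -/
def IsOrchard (E : Finset (A × A)) : Prop :=
  ∃ F : Finset (A × A), Relation.ReflTransGen PickStep E F ∧ IsSingleCherry F

/-- A tree-based network: it has a rooted spanning tree (an arborescence on all
vertices, contained in the arc set) whose leaves are leaves of the network. -/
def IsTreeBased (E : Finset (A × A)) : Prop :=
  ∃ S : Finset (A × A), S ⊆ E ∧ verts S = verts E ∧
    (∃ r ∈ verts E, ideg S r = 0 ∧
      (∀ a ∈ verts E, a ≠ r → ideg S a = 1) ∧
      ∀ a ∈ verts E, Relation.ReflTransGen (Arc S) r a) ∧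
    (∀ a ∈ verts E, odeg S a = 0 → odeg E a = 0)

set_option linter.unusedSectionVars false

lemma mem_verts {E : Finset (A × A)} {a : A} :
    a ∈ verts E ↔ (∃ b, (a, b) ∈ E) ∨ (∃ b, (b, a) ∈ E) := by
  unfold verts
  simp only [Finset.mem_union, Finset.mem_image]
  constructor
  · rintro (⟨⟨b, c⟩, h, rfl⟩ | ⟨⟨b, c⟩, h, rfl⟩)
    · exact Or.inl ⟨c, h⟩
    · exact Or.inr ⟨b, h⟩
  · rintro (⟨b, h⟩ | ⟨b, h⟩)
    · exact Or.inl ⟨(a, b), h, rfl⟩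
    · exact Or.inr ⟨(b, a), h, rfl⟩

lemma mem_verts_fst {E : Finset (A × A)} {a b : A} (h : (a, b) ∈ E) : a ∈ verts E :=
  mem_verts.2 (Or.inl ⟨b, h⟩)
lemma mem_verts_snd {E : Finset (A × A)} {a b : A} (h : (a, b) ∈ E) : b ∈ verts E :=
  mem_verts.2 (Or.inr ⟨a, h⟩)

lemma ideg_eq_zero {E : Finset (A × A)} {a : A} (h : ∀ c, (c, a) ∉ E) : ideg E a = 0 := by
  unfold ideg
  rw [Finset.card_eq_zero, Finset.filter_eq_empty_iff]
  rintro ⟨c, d⟩ hm rfl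
  exact h c hm

lemma ideg_pos {E : Finset (A × A)} {a b : A} (h : (b, a) ∈ E) : ideg E a ≠ 0 := by
  unfold ideg
  intro h0
  rw [Finset.card_eq_zero, Finset.filter_eq_empty_iff] at h0
  exact h0 h rfl

lemma odeg_eq_zero {E : Finset (A × A)} {a : A} (h : ∀ c, (a, c) ∉ E) : odeg E a = 0 := by
  unfold odeg
  rw [Finset.card_eq_zero, Finset.filter_eq_empty_iff]
  rintro ⟨c, d⟩ hm rfl
  exact h d hm

lemma odeg_pos {E : Finset (A × A)} {a b : A} (h : (a, b) ∈ E) : odeg E a ≠ 0 := by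
  unfold odeg
  intro h0
  rw [Finset.card_eq_zero, Finset.filter_eq_empty_iff] at h0
  exact h0 h rfl

lemma odeg_zero_notMem {E : Finset (A × A)} {a b : A} (h : odeg E a = 0) : (a, b) ∉ E :=
  fun hm => odeg_pos hm h

lemma ideg_filter_eq_one {E : Finset (A × A)} {a b : A} (hb : (b, a) ∈ E)
    (h : ∀ c, (c, a) ∈ E → c = b) : ideg E a = 1 := by
  unfold ideg
  rw [Finset.card_eq_one]
  refine ⟨(b, a), ?_⟩
  ext ⟨c, d⟩
  simp only [Finset.mem_filter, Finset.mem_singleton, Prod.mk.injEq]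
  constructor
  · rintro ⟨hm, rfl⟩
    exact ⟨h c hm, rfl⟩
  · rintro ⟨rfl, rfl⟩
    exact ⟨hb, rfl⟩

lemma odeg_filter_eq_one {E : Finset (A × A)} {a b : A} (hb : (a, b) ∈ E)
    (h : ∀ c, (a, c) ∈ E → c = b) : odeg E a = 1 := by
  unfold odeg
  rw [Finset.card_eq_one]
  refine ⟨(a, b), ?_⟩
  ext ⟨c, d⟩
  simp only [Finset.mem_filter, Finset.mem_singleton, Prod.mk.injEq]
  constructor
  · rintro ⟨hm, rfl⟩
    exact ⟨rfl, h d hm⟩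
  · rintro ⟨rfl, rfl⟩
    exact ⟨hb, rfl⟩

lemma ideg_unique {E : Finset (A × A)} {a : A} (h : ideg E a = 1) {b c : A}
    (hb : (b, a) ∈ E) (hc : (c, a) ∈ E) : b = c := by
  unfold ideg at h
  obtain ⟨p, hp⟩ := Finset.card_eq_one.mp h
  have h1 : (b, a) ∈ E.filter (fun p => p.2 = a) := Finset.mem_filter.2 ⟨hb, rfl⟩
  have h2 : (c, a) ∈ E.filter (fun p => p.2 = a) := Finset.mem_filter.2 ⟨hc, rfl⟩
  rw [hp, Finset.mem_singleton] at h1 h2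
  exact congrArg Prod.fst (h1.trans h2.symm)

lemma odeg_unique {E : Finset (A × A)} {a : A} (h : odeg E a = 1) {b c : A}
    (hb : (a, b) ∈ E) (hc : (a, c) ∈ E) : b = c := by
  unfold odeg at h
  obtain ⟨p, hp⟩ := Finset.card_eq_one.mp h
  have h1 : (a, b) ∈ E.filter (fun p => p.1 = a) := Finset.mem_filter.2 ⟨hb, rfl⟩
  have h2 : (a, c) ∈ E.filter (fun p => p.1 = a) := Finset.mem_filter.2 ⟨hc, rfl⟩
  rw [hp, Finset.mem_singleton] at h1 h2
  exact congrArg Prod.snd (h1.trans h2.symm)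

lemma ideg_exists {E : Finset (A × A)} {a : A} (h : ideg E a ≠ 0) : ∃ b, (b, a) ∈ E := by
  unfold ideg at h
  obtain ⟨⟨b, c⟩, hm⟩ := Finset.card_pos.mp (Nat.pos_of_ne_zero h)
  have := Finset.mem_filter.mp hm
  exact ⟨b, this.2 ▸ this.1⟩

lemma ideg_two_cases {E : Finset (A × A)} {a : A} (h : ideg E a = 2) {b c : A}
    (hbc : b ≠ c) (hb : (b, a) ∈ E) (hc : (c, a) ∈ E) {d : A} (hd : (d, a) ∈ E) :
    d = b ∨ d = c := by
  have hsub : ({(b, a), (c, a)} : Finset (A × A)) ⊆ E.filter (fun p => p.2 = a) := by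
    intro p hp
    rcases Finset.mem_insert.mp hp with rfl | hp
    · exact Finset.mem_filter.2 ⟨hb, rfl⟩
    · rw [Finset.mem_singleton] at hp
      subst hp
      exact Finset.mem_filter.2 ⟨hc, rfl⟩
  have hcard : (E.filter (fun p => p.2 = a)).card ≤ ({(b, a), (c, a)} : Finset (A × A)).card := by
    rw [Finset.card_pair (by simp [hbc])]
    exact le_of_eq h
  have heq := Finset.eq_of_subset_of_card_le hsub hcard
  have : (d, a) ∈ ({(b, a), (c, a)} : Finset (A × A)) := by
    rw [heq]; exact Finset.mem_filter.2 ⟨hd, rfl⟩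
  rcases Finset.mem_insert.mp this with h' | h'
  · exact Or.inl (congrArg Prod.fst h')
  · rw [Finset.mem_singleton] at h'
    exact Or.inr (congrArg Prod.fst h')

lemma odeg_two_cases {E : Finset (A × A)} {a : A} (h : odeg E a = 2) {b c : A}
    (hbc : b ≠ c) (hb : (a, b) ∈ E) (hc : (a, c) ∈ E) {d : A} (hd : (a, d) ∈ E) :
    d = b ∨ d = c := by
  have hsub : ({(a, b), (a, c)} : Finset (A × A)) ⊆ E.filter (fun p => p.1 = a) := by
    intro p hp
    rcases Finset.mem_insert.mp hp with rfl | hp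
    · exact Finset.mem_filter.2 ⟨hb, rfl⟩
    · rw [Finset.mem_singleton] at hp
      subst hp
      exact Finset.mem_filter.2 ⟨hc, rfl⟩
  have hcard : (E.filter (fun p => p.1 = a)).card ≤ ({(a, b), (a, c)} : Finset (A × A)).card := by
    rw [Finset.card_pair (by simp [hbc])]
    exact le_of_eq h
  have heq := Finset.eq_of_subset_of_card_le hsub hcard
  have : (a, d) ∈ ({(a, b), (a, c)} : Finset (A × A)) := by
    rw [heq]; exact Finset.mem_filter.2 ⟨hd, rfl⟩
  rcases Finset.mem_insert.mp this with h' | h'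
  · exact Or.inl (congrArg Prod.snd h')
  · rw [Finset.mem_singleton] at h'
    exact Or.inr (congrArg Prod.snd h')

lemma ideg_congr {E F : Finset (A × A)} {a : A} (h : ∀ c, (c, a) ∈ E ↔ (c, a) ∈ F) :
    ideg E a = ideg F a := by
  unfold ideg
  congr 1
  ext ⟨c, d⟩
  simp only [Finset.mem_filter]
  constructor
  · rintro ⟨hm, rfl⟩
    exact ⟨(h c).1 hm, rfl⟩
  · rintro ⟨hm, rfl⟩
    exact ⟨(h c).2 hm, rfl⟩

lemma odeg_congr {E F : Finset (A × A)} {a : A} (h : ∀ c, (a, c) ∈ E ↔ (a, c) ∈ F) :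
    odeg E a = odeg F a := by
  unfold odeg
  congr 1
  ext ⟨c, d⟩
  simp only [Finset.mem_filter]
  constructor
  · rintro ⟨hm, rfl⟩
    exact ⟨(h d).1 hm, rfl⟩
  · rintro ⟨hm, rfl⟩
    exact ⟨(h d).2 hm, rfl⟩

lemma odeg_swap {E F : Finset (A × A)} {a b c : A} (hb : (a, b) ∈ E) (hc : (a, c) ∉ E)
    (h : ∀ d, (a, d) ∈ F ↔ d = c ∨ ((a, d) ∈ E ∧ d ≠ b)) : odeg F a = odeg E a := by
  have hfil : F.filter (fun p => p.1 = a)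
      = insert (a, c) ((E.filter (fun p => p.1 = a)).erase (a, b)) := by
    ext ⟨u, v⟩
    simp only [Finset.mem_filter, Finset.mem_insert, Finset.mem_erase, ne_eq, Prod.mk.injEq]
    constructor
    · rintro ⟨huv, rfl⟩
      rcases (h v).1 huv with rfl | ⟨hv, hvb⟩
      · exact Or.inl ⟨rfl, rfl⟩
      · exact Or.inr ⟨fun hh => hvb hh.2, hv, rfl⟩
    · rintro (⟨h1, h2⟩ | ⟨hne, hv, h1⟩)
      · subst h1; subst h2; exact ⟨(h _).2 (Or.inl rfl), rfl⟩
      · subst h1; exact ⟨(h v).2 (Or.inr ⟨hv, fun hvb => hne ⟨rfl, hvb⟩⟩), rfl⟩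
  unfold odeg
  rw [hfil, Finset.card_insert_of_notMem, Finset.card_erase_of_mem]
  · have hpos : 0 < (E.filter (fun p => p.1 = a)).card :=
      Finset.card_pos.2 ⟨(a, b), Finset.mem_filter.2 ⟨hb, rfl⟩⟩
    omega
  · exact Finset.mem_filter.2 ⟨hb, rfl⟩
  · intro hm
    exact hc (Finset.mem_filter.mp (Finset.mem_of_mem_erase hm)).1

lemma odeg_swap2 {E F : Finset (A × A)} {a b₁ b₂ c₁ c₂ : A}
    (hb₁ : (a, b₁) ∈ E) (hb₂ : (a, b₂) ∈ E) (hb : b₁ ≠ b₂)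
    (hc₁ : (a, c₁) ∉ E) (hc₂ : (a, c₂) ∉ E) (hc : c₁ ≠ c₂)
    (h : ∀ d, (a, d) ∈ F ↔ d = c₁ ∨ d = c₂ ∨ ((a, d) ∈ E ∧ d ≠ b₁ ∧ d ≠ b₂)) :
    odeg F a = odeg E a := by
  have hfil : F.filter (fun p => p.1 = a)
      = insert (a, c₁) (insert (a, c₂)
          (((E.filter (fun p => p.1 = a)).erase (a, b₁)).erase (a, b₂))) := by
    ext ⟨u, v⟩
    simp only [Finset.mem_filter, Finset.mem_insert, Finset.mem_erase, ne_eq, Prod.mk.injEq]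
    constructor
    · rintro ⟨huv, rfl⟩
      rcases (h v).1 huv with rfl | rfl | ⟨hv, hv1, hv2⟩
      · exact Or.inl ⟨rfl, rfl⟩
      · exact Or.inr (Or.inl ⟨rfl, rfl⟩)
      · exact Or.inr (Or.inr ⟨fun hh => hv2 hh.2, fun hh => hv1 hh.2, hv, rfl⟩)
    · rintro (⟨h1, h2⟩ | ⟨h1, h2⟩ | ⟨hne2, hne1, hv, h1⟩)
      · subst h1; subst h2; exact ⟨(h _).2 (Or.inl rfl), rfl⟩
      · subst h1; subst h2; exact ⟨(h _).2 (Or.inr (Or.inl rfl)), rfl⟩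
      · subst h1; exact ⟨(h v).2 (Or.inr (Or.inr ⟨hv, fun hh => hne1 ⟨rfl, hh⟩, fun hh => hne2 ⟨rfl, hh⟩⟩)), rfl⟩
  unfold odeg
  have hmb₂ : (a, b₂) ∈ (E.filter (fun p => p.1 = a)).erase (a, b₁) :=
    Finset.mem_erase.2 ⟨by simp [Ne.symm hb], Finset.mem_filter.2 ⟨hb₂, rfl⟩⟩
  have hmb₁ : (a, b₁) ∈ E.filter (fun p => p.1 = a) := Finset.mem_filter.2 ⟨hb₁, rfl⟩
  rw [hfil, Finset.card_insert_of_notMem, Finset.card_insert_of_notMem,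
    Finset.card_erase_of_mem hmb₂, Finset.card_erase_of_mem hmb₁]
  · have h1 : 0 < (E.filter (fun p => p.1 = a)).card := Finset.card_pos.2 ⟨_, hmb₁⟩
    have h2 : 0 < ((E.filter (fun p => p.1 = a)).erase (a, b₁)).card := Finset.card_pos.2 ⟨_, hmb₂⟩
    rw [Finset.card_erase_of_mem hmb₁] at h2
    omega
  · intro hm
    exact hc₂ (Finset.mem_filter.mp (Finset.mem_of_mem_erase (Finset.mem_of_mem_erase hm))).1
  · intro hm
    rcases Finset.mem_insert.mp hm with h' | h'
    · exact hc (congrArg Prod.snd h')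
    · exact hc₁ (Finset.mem_filter.mp (Finset.mem_of_mem_erase (Finset.mem_of_mem_erase h'))).1

lemma transGen_subrel {r s : A → A → Prop} (h : ∀ a b, r a b → Relation.TransGen s a b)
    {a b : A} (ht : Relation.TransGen r a b) : Relation.TransGen s a b := by
  induction ht with
  | single h' => exact h _ _ h'
  | tail _ h' ih => exact ih.trans (h _ _ h')

lemma reflTransGen_subrel {r s : A → A → Prop} (h : ∀ a b, r a b → Relation.ReflTransGen s a b)
    {a b : A} (ht : Relation.ReflTransGen r a b) : Relation.ReflTransGen s a b := by
  induction ht with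
  | refl => exact Relation.ReflTransGen.refl
  | tail _ h' ih => exact ih.trans (h _ _ h')

lemma reach_sink {S : Finset (A × A)} {a b : A} (h : ∀ c, (a, c) ∉ S)
    (hr : Relation.ReflTransGen (Arc S) a b) : b = a := by
  rcases Relation.ReflTransGen.cases_head hr with rfl | ⟨c, hac, _⟩
  · rfl
  · exact absurd hac (h c)

lemma verts_mono {S E : Finset (A × A)} (h : S ⊆ E) : verts S ⊆ verts E := by
  intro a ha
  rcases mem_verts.1 ha with ⟨b, hb⟩ | ⟨b, hb⟩
  · exact mem_verts_fst (h hb)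
  · exact mem_verts_snd (h hb)
lemma cherry_key {E E' : Finset (A × A)} (hnet : IsDirBinNet E) (h : PickCherry E E') :
    IsDirBinNet E' ∧ (IsTreeBased E' → IsTreeBased E) := by
  obtain ⟨x, y, p, g, hxy, ⟨hxv, hxi, hxo⟩, ⟨hyv, hyi, hyo⟩, hpx, hpy, hgp, hE'⟩ := h
  obtain ⟨hacyc, ⟨r, ⟨hrv, hri⟩, hru⟩, hdeg⟩ := hnet
  have irr : ∀ a : A, (a, a) ∉ E := fun a ha => hacyc a (Relation.TransGen.single ha)
  have hneq_px : p ≠ x := by rintro rfl; exact odeg_pos hpx hxo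
  have hneq_py : p ≠ y := by rintro rfl; exact odeg_pos hpy hyo
  have hneq_gx : g ≠ x := by rintro rfl; exact odeg_pos hgp hxo
  have hneq_gy : g ≠ y := by rintro rfl; exact odeg_pos hgp hyo
  have hneq_gp : g ≠ p := by rintro rfl; exact irr g hgp
  have hpv : p ∈ verts E := mem_verts_fst hpx
  have hptree : ideg E p = 1 ∧ odeg E p = 2 := by
    rcases hdeg p hpv with ⟨h1, h2⟩ | ⟨h1, h2⟩ | h' | ⟨h1, h2⟩
    · exact absurd h1 (ideg_pos hgp)
    · exact absurd h2 (odeg_pos hpx)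
    · exact h'
    · exact absurd (odeg_unique h2 hpx hpy) hxy
  obtain ⟨hpi1, hpo2⟩ := hptree
  have upx : ∀ c, (c, x) ∈ E → c = p := fun c hc => ideg_unique hxi hc hpx
  have upy : ∀ c, (c, y) ∈ E → c = p := fun c hc => ideg_unique hyi hc hpy
  have ugp : ∀ c, (c, p) ∈ E → c = g := fun c hc => ideg_unique hpi1 hc hgp
  have uout : ∀ c, (p, c) ∈ E → c = x ∨ c = y := fun c hc => odeg_two_cases hpo2 hxy hpx hpy hc
  have hgxE : (g, x) ∉ E := fun hc => hneq_gp (upx g hc)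
  have hnoxout : ∀ c, (x, c) ∉ E := fun c => odeg_zero_notMem hxo
  have hnoyout : ∀ c, (y, c) ∉ E := fun c => odeg_zero_notMem hyo
  have memE' : ∀ a b : A, (a, b) ∈ E' ↔ (a = g ∧ b = x) ∨
      ((a, b) ∈ E ∧ ¬(a = p ∧ b = x) ∧ ¬(a = p ∧ b = y) ∧ ¬(a = g ∧ b = p)) := by
    intro a b
    subst hE'
    simp only [Finset.mem_insert, Finset.mem_erase, ne_eq, Prod.mk.injEq]
    tauto
  have hgxE' : (g, x) ∈ E' := (memE' g x).2 (Or.inl ⟨rfl, rfl⟩)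
  have vertsE' : ∀ a : A, a ∈ verts E' ↔ a ∈ verts E ∧ a ≠ p ∧ a ≠ y := by
    intro a
    constructor
    · intro hm
      rcases mem_verts.1 hm with ⟨b, hb⟩ | ⟨b, hb⟩
      · rcases (memE' a b).1 hb with ⟨rfl, rfl⟩ | ⟨hmE, hn1, hn2, hn3⟩
        · exact ⟨mem_verts_fst hgp, hneq_gp, hneq_gy⟩
        · refine ⟨mem_verts_fst hmE, ?_, ?_⟩
          · rintro rfl
            rcases uout b hmE with rfl | rfl
            · exact hn1 ⟨rfl, rfl⟩
            · exact hn2 ⟨rfl, rfl⟩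
          · rintro rfl
            exact hnoyout b hmE
      · rcases (memE' b a).1 hb with ⟨rfl, rfl⟩ | ⟨hmE, hn1, hn2, hn3⟩
        · exact ⟨hxv, Ne.symm hneq_px, hxy⟩
        · refine ⟨mem_verts_snd hmE, ?_, ?_⟩
          · rintro rfl
            exact hn3 ⟨ugp b hmE, rfl⟩
          · rintro rfl
            exact hn2 ⟨upy b hmE, rfl⟩
    · rintro ⟨hv, hap, hay⟩
      rcases mem_verts.1 hv with ⟨b, hb⟩ | ⟨b, hb⟩
      · by_cases hcase : a = g ∧ b = p
        · exact hcase.1 ▸ mem_verts_fst hgxE'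
        · refine mem_verts_fst ((memE' a b).2 (Or.inr ⟨hb, ?_, ?_, hcase⟩))
          · exact fun hh => hap hh.1
          · exact fun hh => hap hh.1
      · by_cases hcase : a = x
        · exact hcase ▸ mem_verts_snd hgxE'
        · refine mem_verts_snd ((memE' b a).2 (Or.inr ⟨hb, ?_, ?_, ?_⟩))
          · exact fun hh => hcase hh.2
          · exact fun hh => hay hh.2
          · exact fun hh => hap hh.2
  have idegE'_eq : ∀ a : A, a ≠ x → a ≠ y → a ≠ p → ideg E' a = ideg E a := by
    intro a h1 h2 h3
    refine ideg_congr fun c => ?_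
    rw [memE' c a]
    constructor
    · rintro (⟨_, ha⟩ | ⟨hm, _⟩)
      · exact absurd ha h1
      · exact hm
    · intro hm
      exact Or.inr ⟨hm, fun hh => h1 hh.2, fun hh => h2 hh.2, fun hh => h3 hh.2⟩
  have odegE'_eq : ∀ a : A, a ≠ g → a ≠ p → odeg E' a = odeg E a := by
    intro a h1 h2
    refine odeg_congr fun c => ?_
    rw [memE' a c]
    constructor
    · rintro (⟨ha, _⟩ | ⟨hm, _⟩)
      · exact absurd ha h1
      · exact hm
    · intro hm
      exact Or.inr ⟨hm, fun hh => h2 hh.1, fun hh => h2 hh.1, fun hh => h1 hh.1⟩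
  have odegE'_g : odeg E' g = odeg E g := by
    refine odeg_swap hgp hgxE fun d => ?_
    rw [memE' g d]
    constructor
    · rintro (⟨_, rfl⟩ | ⟨hm, _, _, hn3⟩)
      · exact Or.inl rfl
      · exact Or.inr ⟨hm, fun hdp => hn3 ⟨rfl, hdp⟩⟩
    · rintro (rfl | ⟨hm, hdp⟩)
      · exact Or.inl ⟨rfl, rfl⟩
      · refine Or.inr ⟨hm, fun hh => hneq_gp hh.1, fun hh => hneq_gp hh.1, fun hh => hdp hh.2⟩
  have hxiE' : ideg E' x = 1 := by
    refine ideg_filter_eq_one hgxE' fun c hc => ?_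
    rcases (memE' c x).1 hc with ⟨h1, _⟩ | ⟨hm, hn1, _, _⟩
    · exact h1
    · exact absurd ⟨upx c hm, rfl⟩ hn1
  have hxoE' : odeg E' x = 0 := by
    refine odeg_eq_zero fun c hc => ?_
    rcases (memE' x c).1 hc with ⟨h1, _⟩ | ⟨hm, _⟩
    · exact hneq_gx h1.symm
    · exact hnoxout c hm
  constructor
  · -- IsDirBinNet E'
    refine ⟨?_, ⟨r, ⟨?_, ?_⟩, ?_⟩, ?_⟩
    · intro a hta
      apply hacyc a
      refine transGen_subrel (fun c d hcd => ?_) hta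
      rcases (memE' c d).1 hcd with ⟨h1, h2⟩ | ⟨hm, _⟩
      · subst h1; subst h2
        exact Relation.TransGen.head (b := p) hgp (Relation.TransGen.single hpx)
      · exact Relation.TransGen.single hm
    · refine (vertsE' r).2 ⟨hrv, ?_, ?_⟩
      · rintro rfl
        exact ideg_pos hgp hri
      · rintro rfl
        exact ideg_pos hpy hri
    · have hrx : r ≠ x := by rintro rfl; exact ideg_pos hpx hri
      have hry : r ≠ y := by rintro rfl; exact ideg_pos hpy hri
      have hrp : r ≠ p := by rintro rfl; exact ideg_pos hgp hri
      rw [idegE'_eq r hrx hry hrp]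
      exact hri
    · rintro a ⟨hav, hai⟩
      obtain ⟨haE, hap, hay⟩ := (vertsE' a).1 hav
      have hax : a ≠ x := by rintro rfl; rw [hxiE'] at hai; exact one_ne_zero hai
      rw [idegE'_eq a hax hay hap] at hai
      exact hru a ⟨haE, hai⟩
    · intro a hav
      obtain ⟨haE, hap, hay⟩ := (vertsE' a).1 hav
      by_cases hax : a = x
      · subst hax
        exact Or.inr (Or.inl ⟨hxiE', hxoE'⟩)
      · by_cases hag : a = g
        · subst hag
          rw [idegE'_eq _ hneq_gx hneq_gy hneq_gp, odegE'_g]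
          exact hdeg _ haE
        · rw [idegE'_eq a hax hay hap, odegE'_eq a hag hap]
          exact hdeg a haE
  · -- lift tree-basedness
    rintro ⟨S', hSsub, hSverts, ⟨r', hr'v, hr'i, hr'deg, hr'reach⟩, hleaf⟩
    have hxvE' : x ∈ verts E' := mem_verts_snd hgxE'
    have hgvE' : g ∈ verts E' := mem_verts_fst hgxE'
    have hSx_out : ∀ c, (x, c) ∉ S' := fun c hc => odeg_zero_notMem hxoE' (hSsub hc)
    have hr'x : r' ≠ x := by
      rintro rfl
      exact hneq_gx (reach_sink hSx_out (hr'reach g hgvE'))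
    have hgxS' : (g, x) ∈ S' := by
      have h1 : ideg S' x = 1 := hr'deg x hxvE' (Ne.symm hr'x)
      obtain ⟨c, hc⟩ := ideg_exists (h1 ▸ one_ne_zero)
      rcases (memE' c x).1 (hSsub hc) with ⟨rfl, _⟩ | ⟨hm, hn1, _⟩
      · exact hc
      · exact absurd ⟨upx c hm, rfl⟩ hn1
    obtain ⟨hr'E, hr'p, hr'y⟩ := (vertsE' r').1 hr'v
    set S : Finset (A × A) := insert (g, p) (insert (p, x) (insert (p, y) (S'.erase (g, x)))) with hSdef
    have memS : ∀ a b : A, (a, b) ∈ S ↔ (a = g ∧ b = p) ∨ (a = p ∧ b = x) ∨ (a = p ∧ b = y) ∨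
        ((a, b) ∈ S' ∧ ¬(a = g ∧ b = x)) := by
      intro a b
      rw [hSdef]
      simp only [Finset.mem_insert, Finset.mem_erase, ne_eq, Prod.mk.injEq]
      exact or_congr Iff.rfl (or_congr Iff.rfl (or_congr Iff.rfl and_comm))
    have hgpS : (g, p) ∈ S := (memS g p).2 (Or.inl ⟨rfl, rfl⟩)
    have hpxS : (p, x) ∈ S := (memS p x).2 (Or.inr (Or.inl ⟨rfl, rfl⟩))
    have hpyS : (p, y) ∈ S := (memS p y).2 (Or.inr (Or.inr (Or.inl ⟨rfl, rfl⟩)))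
    have hSE : S ⊆ E := by
      rintro ⟨a, b⟩ hm
      rcases (memS a b).1 hm with ⟨h1, h2⟩ | ⟨h1, h2⟩ | ⟨h1, h2⟩ | ⟨hm', hne⟩
      · subst h1; subst h2; exact hgp
      · subst h1; subst h2; exact hpx
      · subst h1; subst h2; exact hpy
      · rcases (memE' a b).1 (hSsub hm') with ⟨h1, h2⟩ | ⟨hmE, _⟩
        · exact absurd ⟨h1, h2⟩ hne
        · exact hmE
    refine ⟨S, hSE, ?_, ⟨r', hr'E, ?_, ?_, ?_⟩, ?_⟩
    · -- verts S = verts E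
      apply Finset.Subset.antisymm (verts_mono hSE)
      intro a ha
      by_cases h1 : a = p
      · exact h1 ▸ mem_verts_snd hgpS
      by_cases h2 : a = x
      · exact h2 ▸ mem_verts_snd hpxS
      by_cases h3 : a = y
      · exact h3 ▸ mem_verts_snd hpyS
      by_cases h4 : a = g
      · exact h4 ▸ mem_verts_fst hgpS
      have haE' : a ∈ verts S' := hSverts ▸ (vertsE' a).2 ⟨ha, h1, h3⟩
      rcases mem_verts.1 haE' with ⟨b, hb⟩ | ⟨b, hb⟩
      · exact mem_verts_fst ((memS a b).2 (Or.inr (Or.inr (Or.inr ⟨hb, fun hh => h4 hh.1⟩))))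
      · exact mem_verts_snd ((memS b a).2 (Or.inr (Or.inr (Or.inr ⟨hb, fun hh => h2 hh.2⟩))))
    · -- ideg S r' = 0
      refine ideg_eq_zero fun c hc => ?_
      rcases (memS c r').1 hc with ⟨_, h2⟩ | ⟨_, h2⟩ | ⟨_, h2⟩ | ⟨hm', _⟩
      · exact hr'p h2
      · exact hr'x h2
      · exact hr'y h2
      · exact ideg_pos hm' hr'i
    · -- indegree one
      intro a haE har
      by_cases hax : a = x
      · rw [hax]
        refine ideg_filter_eq_one hpxS fun c hc => ?_
        rcases (memS c x).1 hc with ⟨h1, h2⟩ | ⟨h1, _⟩ | ⟨h1, h2⟩ | ⟨hm', hne⟩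
        · exact absurd h2 (Ne.symm hneq_px)
        · exact h1
        · exact absurd h2 hxy
        · rcases (memE' c x).1 (hSsub hm') with ⟨h1, _⟩ | ⟨hmE, hn1, _⟩
          · exact absurd ⟨h1, rfl⟩ hne
          · exact absurd ⟨upx c hmE, rfl⟩ hn1
      by_cases hay : a = y
      · rw [hay]
        refine ideg_filter_eq_one hpyS fun c hc => ?_
        rcases (memS c y).1 hc with ⟨h1, h2⟩ | ⟨h1, h2⟩ | ⟨h1, _⟩ | ⟨hm', hne⟩
        · exact absurd h2 (Ne.symm hneq_py)
        · exact absurd h2.symm hxy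
        · exact h1
        · rcases (memE' c y).1 (hSsub hm') with ⟨_, h2⟩ | ⟨hmE, _, hn2, _⟩
          · exact absurd h2.symm hxy
          · exact absurd ⟨upy c hmE, rfl⟩ hn2
      by_cases hap : a = p
      · rw [hap]
        refine ideg_filter_eq_one hgpS fun c hc => ?_
        rcases (memS c p).1 hc with ⟨h1, _⟩ | ⟨h1, h2⟩ | ⟨h1, h2⟩ | ⟨hm', hne⟩
        · exact h1
        · exact absurd h2 hneq_px
        · exact absurd h2 hneq_py
        · rcases (memE' c p).1 (hSsub hm') with ⟨_, h2⟩ | ⟨hmE, _, _, hn3⟩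
          · exact absurd h2 hneq_px
          · exact absurd ⟨ugp c hmE, rfl⟩ hn3
      have hcongr : ideg S a = ideg S' a := by
        refine ideg_congr fun c => ?_
        rw [memS c a]
        constructor
        · rintro (⟨_, h2⟩ | ⟨_, h2⟩ | ⟨_, h2⟩ | ⟨hm', _⟩)
          · exact absurd h2 hap
          · exact absurd h2 hax
          · exact absurd h2 hay
          · exact hm'
        · intro hm'
          exact Or.inr (Or.inr (Or.inr ⟨hm', fun hh => hax hh.2⟩))
      rw [hcongr]
      exact hr'deg a ((vertsE' a).2 ⟨haE, hap, hay⟩) har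
    · -- reachability
      have transfer : ∀ a : A, Relation.ReflTransGen (Arc S') r' a →
          Relation.ReflTransGen (Arc S) r' a := by
        intro a h
        refine reflTransGen_subrel (fun c d hcd => ?_) h
        by_cases hcase : c = g ∧ d = x
        · obtain ⟨h1, h2⟩ := hcase
          subst h1; subst h2
          exact Relation.ReflTransGen.head (hgpS : Arc S _ p) (Relation.ReflTransGen.single hpxS)
        · exact Relation.ReflTransGen.single ((memS c d).2 (Or.inr (Or.inr (Or.inr ⟨hcd, hcase⟩))))
      intro a haE
      by_cases hap : a = p
      · rw [hap]
        exact (transfer g (hr'reach g hgvE')).tail hgpS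
      by_cases hay : a = y
      · rw [hay]
        exact ((transfer g (hr'reach g hgvE')).tail hgpS).tail hpyS
      exact transfer a (hr'reach a ((vertsE' a).2 ⟨haE, hap, hay⟩))
    · -- leaf condition
      intro a haE h0
      by_cases hap : a = p
      · exact absurd h0 (hap ▸ odeg_pos hpxS)
      by_cases hag : a = g
      · exact absurd h0 (hag ▸ odeg_pos hgpS)
      by_cases hax : a = x
      · exact hax ▸ hxo
      by_cases hay : a = y
      · exact hay ▸ hyo
      have hcongr : odeg S' a = odeg S a := by
        refine odeg_congr fun c => ?_
        rw [memS a c]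
        constructor
        · intro hm'
          exact Or.inr (Or.inr (Or.inr ⟨hm', fun hh => hag hh.1⟩))
        · rintro (⟨h1, _⟩ | ⟨h1, _⟩ | ⟨h1, _⟩ | ⟨hm', _⟩)
          · exact absurd h1 hag
          · exact absurd h1 hap
          · exact absurd h1 hap
          · exact hm'
      rw [← hcongr] at h0
      have h1 : odeg E' a = 0 := hleaf a ((vertsE' a).2 ⟨haE, hap, hay⟩) h0
      rw [← odegE'_eq a hag hap]
      exact h1
lemma ret_key {E E' : Finset (A × A)} (hnet : IsDirBinNet E) (h : PickRetCherry E E') :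
    IsDirBinNet E' ∧ (IsTreeBased E' → IsTreeBased E) := by
  obtain ⟨x, y, u, v, g, w, ⟨hxv, hxi, hxo⟩, ⟨hyv, hyi, hyo⟩, hvx, huy, huv, hwv, hwu, hgu,
    hvi2, hvo1, hui1, huo2, hE'⟩ := h
  obtain ⟨hacyc, ⟨r, ⟨hrv, hri⟩, hru⟩, hdeg⟩ := hnet
  have irr : ∀ a : A, (a, a) ∉ E := fun a ha => hacyc a (Relation.TransGen.single ha)
  have h_uv : u ≠ v := fun h => irr u (h ▸ huv)
  have h_wv : w ≠ v := fun h => irr w (h ▸ hwv)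
  have h_gu : g ≠ u := fun h => irr g (h ▸ hgu)
  have h_vx : v ≠ x := by rintro rfl; exact odeg_pos hvx hxo
  have h_vy : v ≠ y := by rintro rfl; exact odeg_pos hvx hyo
  have h_ux : u ≠ x := by rintro rfl; exact odeg_pos huv hxo
  have h_uy : u ≠ y := by rintro rfl; exact odeg_pos huv hyo
  have h_wx : w ≠ x := by rintro rfl; exact odeg_pos hwv hxo
  have h_wy : w ≠ y := by rintro rfl; exact odeg_pos hwv hyo
  have h_gx : g ≠ x := by rintro rfl; exact odeg_pos hgu hxo
  have h_gy : g ≠ y := by rintro rfl; exact odeg_pos hgu hyo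
  have h_xy : x ≠ y := by rintro rfl; exact h_uv (ideg_unique hxi huy hvx)
  have uvx : ∀ c, (c, x) ∈ E → c = v := fun c hc => ideg_unique hxi hc hvx
  have uuy : ∀ c, (c, y) ∈ E → c = u := fun c hc => ideg_unique hyi hc huy
  have ugu : ∀ c, (c, u) ∈ E → c = g := fun c hc => ideg_unique hui1 hc hgu
  have uout_u : ∀ c, (u, c) ∈ E → c = v ∨ c = y := fun c hc => odeg_two_cases huo2 h_vy huv huy hc
  have uout_v : ∀ c, (v, c) ∈ E → c = x := fun c hc => odeg_unique hvo1 hc hvx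
  have uin_v : ∀ c, (c, v) ∈ E → c = u ∨ c = w := fun c hc => ideg_two_cases hvi2 (Ne.symm hwu) huv hwv hc
  have h_gv : g ≠ v := by
    intro hh
    exact h_ux (odeg_unique hvo1 (hh ▸ hgu) hvx)
  have hwxE : (w, x) ∉ E := fun hc => h_wv (uvx w hc)
  have hgyE : (g, y) ∉ E := fun hc => h_gu (uuy g hc)
  have hnoxout : ∀ c, (x, c) ∉ E := fun c => odeg_zero_notMem hxo
  have hnoyout : ∀ c, (y, c) ∉ E := fun c => odeg_zero_notMem hyo
  have memE' : ∀ a b : A, (a, b) ∈ E' ↔ (a = w ∧ b = x) ∨ (a = g ∧ b = y) ∨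
      (¬(a = u ∧ b = y) ∧ ¬(a = g ∧ b = u) ∧ ¬(a = v ∧ b = x) ∧ ¬(a = w ∧ b = v) ∧
        ¬(a = u ∧ b = v) ∧ (a, b) ∈ E) := by
    intro a b
    subst hE'
    simp only [Finset.mem_insert, Finset.mem_erase, ne_eq, Prod.mk.injEq]
  have hwxE' : (w, x) ∈ E' := (memE' w x).2 (Or.inl ⟨rfl, rfl⟩)
  have hgyE' : (g, y) ∈ E' := (memE' g y).2 (Or.inr (Or.inl ⟨rfl, rfl⟩))
  have vertsE' : ∀ a : A, a ∈ verts E' ↔ a ∈ verts E ∧ a ≠ u ∧ a ≠ v := by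
    intro a
    constructor
    · intro hm
      rcases mem_verts.1 hm with ⟨b, hb⟩ | ⟨b, hb⟩
      · rcases (memE' a b).1 hb with ⟨rfl, _⟩ | ⟨rfl, _⟩ | ⟨hn1, hn2, hn3, hn4, hn5, hmE⟩
        · exact ⟨mem_verts_fst hwv, hwu, h_wv⟩
        · exact ⟨mem_verts_fst hgu, h_gu, h_gv⟩
        · refine ⟨mem_verts_fst hmE, ?_, ?_⟩
          · rintro rfl
            rcases uout_u b hmE with rfl | rfl
            · exact hn5 ⟨rfl, rfl⟩
            · exact hn1 ⟨rfl, rfl⟩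
          · rintro rfl
            exact hn3 ⟨rfl, uout_v b hmE⟩
      · rcases (memE' b a).1 hb with ⟨_, rfl⟩ | ⟨_, rfl⟩ | ⟨hn1, hn2, hn3, hn4, hn5, hmE⟩
        · exact ⟨hxv, Ne.symm h_ux, Ne.symm h_vx⟩
        · exact ⟨hyv, Ne.symm h_uy, Ne.symm h_vy⟩
        · refine ⟨mem_verts_snd hmE, ?_, ?_⟩
          · rintro rfl
            exact hn2 ⟨ugu b hmE, rfl⟩
          · rintro rfl
            rcases uin_v b hmE with rfl | rfl
            · exact hn5 ⟨rfl, rfl⟩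
            · exact hn4 ⟨rfl, rfl⟩
    · rintro ⟨hv, hau, hav⟩
      rcases mem_verts.1 hv with ⟨b, hb⟩ | ⟨b, hb⟩
      · by_cases h1 : a = w ∧ b = v
        · exact h1.1 ▸ mem_verts_fst hwxE'
        · by_cases h2 : a = g ∧ b = u
          · exact h2.1 ▸ mem_verts_fst hgyE'
          · refine mem_verts_fst ((memE' a b).2 (Or.inr (Or.inr
              ⟨fun hh => hau hh.1, h2, fun hh => hav hh.1, h1, fun hh => hau hh.1, hb⟩)))
      · by_cases h1 : a = x
        · exact h1 ▸ mem_verts_snd hwxE'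
        · by_cases h2 : a = y
          · exact h2 ▸ mem_verts_snd hgyE'
          · refine mem_verts_snd ((memE' b a).2 (Or.inr (Or.inr
              ⟨fun hh => h2 hh.2, fun hh => hau hh.2, fun hh => h1 hh.2,
               fun hh => hav hh.2, fun hh => hav hh.2, hb⟩)))
  have idegE'_eq : ∀ a : A, a ≠ x → a ≠ y → a ≠ v → a ≠ u → ideg E' a = ideg E a := by
    intro a h1 h2 h3 h4
    refine ideg_congr fun c => ?_
    rw [memE' c a]
    constructor
    · rintro (⟨_, ha⟩ | ⟨_, ha⟩ | ⟨_, _, _, _, _, hm⟩)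
      · exact absurd ha h1
      · exact absurd ha h2
      · exact hm
    · intro hm
      exact Or.inr (Or.inr ⟨fun hh => h2 hh.2, fun hh => h4 hh.2, fun hh => h1 hh.2,
        fun hh => h3 hh.2, fun hh => h3 hh.2, hm⟩)
  have odegE'_eq : ∀ a : A, a ≠ w → a ≠ g → a ≠ u → a ≠ v → odeg E' a = odeg E a := by
    intro a h1 h2 h3 h4
    refine odeg_congr fun c => ?_
    rw [memE' a c]
    constructor
    · rintro (⟨ha, _⟩ | ⟨ha, _⟩ | ⟨_, _, _, _, _, hm⟩)
      · exact absurd ha h1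
      · exact absurd ha h2
      · exact hm
    · intro hm
      exact Or.inr (Or.inr ⟨fun hh => h3 hh.1, fun hh => h2 hh.1, fun hh => h4 hh.1,
        fun hh => h1 hh.1, fun hh => h3 hh.1, hm⟩)
  have hwg_deg : odeg E' w = odeg E w ∧ odeg E' g = odeg E g := by
    by_cases hgw : g = w
    · have hw : odeg E' w = odeg E w := by
        refine odeg_swap2 hwv (hgw ▸ hgu) (Ne.symm h_uv) hwxE (hgw ▸ hgyE) h_xy fun d => ?_
        rw [memE' w d]
        constructor
        · rintro (⟨_, rfl⟩ | ⟨hh, rfl⟩ | ⟨hn1, hn2, hn3, hn4, hn5, hm⟩)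
          · exact Or.inl rfl
          · exact Or.inr (Or.inl rfl)
          · exact Or.inr (Or.inr ⟨hm, fun hh => hn4 ⟨rfl, hh⟩, fun hh => hn2 ⟨hgw.symm ▸ rfl, hh⟩⟩)
        · rintro (rfl | rfl | ⟨hm, hdv, hdu⟩)
          · exact Or.inl ⟨rfl, rfl⟩
          · exact Or.inr (Or.inl ⟨hgw.symm, rfl⟩)
          · exact Or.inr (Or.inr ⟨fun hh => hwu hh.1, fun hh => hdu hh.2, fun hh => h_wv hh.1,
              fun hh => hdv hh.2, fun hh => hwu hh.1, hm⟩)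
      exact ⟨hw, by rw [hgw]; exact hw⟩
    · constructor
      · refine odeg_swap hwv hwxE fun d => ?_
        rw [memE' w d]
        constructor
        · rintro (⟨_, rfl⟩ | ⟨hh, _⟩ | ⟨hn1, hn2, hn3, hn4, hn5, hm⟩)
          · exact Or.inl rfl
          · exact absurd hh.symm hgw
          · exact Or.inr ⟨hm, fun hh => hn4 ⟨rfl, hh⟩⟩
        · rintro (rfl | ⟨hm, hdv⟩)
          · exact Or.inl ⟨rfl, rfl⟩
          · exact Or.inr (Or.inr ⟨fun hh => hwu hh.1, fun hh => hgw hh.1.symm, fun hh => h_wv hh.1,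
              fun hh => hdv hh.2, fun hh => hwu hh.1, hm⟩)
      · refine odeg_swap hgu hgyE fun d => ?_
        rw [memE' g d]
        constructor
        · rintro (⟨hh, _⟩ | ⟨_, rfl⟩ | ⟨hn1, hn2, hn3, hn4, hn5, hm⟩)
          · exact absurd hh hgw
          · exact Or.inl rfl
          · exact Or.inr ⟨hm, fun hh => hn2 ⟨rfl, hh⟩⟩
        · rintro (rfl | ⟨hm, hdu⟩)
          · exact Or.inr (Or.inl ⟨rfl, rfl⟩)
          · exact Or.inr (Or.inr ⟨fun hh => h_gu hh.1, fun hh => hdu hh.2, fun hh => h_gv hh.1,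
              fun hh => hgw hh.1, fun hh => h_gu hh.1, hm⟩)
  obtain ⟨odegE'_w, odegE'_g⟩ := hwg_deg
  have hxiE' : ideg E' x = 1 := by
    refine ideg_filter_eq_one hwxE' fun c hc => ?_
    rcases (memE' c x).1 hc with ⟨h1, _⟩ | ⟨_, h2⟩ | ⟨_, _, hn3, _, _, hm⟩
    · exact h1
    · exact absurd h2 h_xy
    · exact absurd ⟨uvx c hm, rfl⟩ hn3
  have hxoE' : odeg E' x = 0 := by
    refine odeg_eq_zero fun c hc => ?_
    rcases (memE' x c).1 hc with ⟨h1, _⟩ | ⟨h1, _⟩ | ⟨_, _, _, _, _, hm⟩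
    · exact h_wx h1.symm
    · exact h_gx h1.symm
    · exact hnoxout c hm
  have hyiE' : ideg E' y = 1 := by
    refine ideg_filter_eq_one hgyE' fun c hc => ?_
    rcases (memE' c y).1 hc with ⟨_, h2⟩ | ⟨h1, _⟩ | ⟨hn1, _, _, _, _, hm⟩
    · exact absurd h2.symm h_xy
    · exact h1
    · exact absurd ⟨uuy c hm, rfl⟩ hn1
  have hyoE' : odeg E' y = 0 := by
    refine odeg_eq_zero fun c hc => ?_
    rcases (memE' y c).1 hc with ⟨h1, _⟩ | ⟨h1, _⟩ | ⟨_, _, _, _, _, hm⟩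
    · exact h_wy h1.symm
    · exact h_gy h1.symm
    · exact hnoyout c hm
  constructor
  · refine ⟨?_, ⟨r, ⟨?_, ?_⟩, ?_⟩, ?_⟩
    · intro a hta
      apply hacyc a
      refine transGen_subrel (fun c d hcd => ?_) hta
      rcases (memE' c d).1 hcd with ⟨h1, h2⟩ | ⟨h1, h2⟩ | ⟨_, _, _, _, _, hm⟩
      · subst h1; subst h2
        exact Relation.TransGen.head (b := v) hwv (Relation.TransGen.single hvx)
      · subst h1; subst h2
        exact Relation.TransGen.head (b := u) hgu (Relation.TransGen.single huy)
      · exact Relation.TransGen.single hm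
    · refine (vertsE' r).2 ⟨hrv, ?_, ?_⟩
      · rintro rfl
        exact ideg_pos hgu hri
      · rintro rfl
        exact ideg_pos huv hri
    · have h1 : r ≠ x := by rintro rfl; exact ideg_pos hvx hri
      have h2 : r ≠ y := by rintro rfl; exact ideg_pos huy hri
      have h3 : r ≠ v := by rintro rfl; exact ideg_pos huv hri
      have h4 : r ≠ u := by rintro rfl; exact ideg_pos hgu hri
      rw [idegE'_eq r h1 h2 h3 h4]
      exact hri
    · rintro a ⟨hav', hai⟩
      obtain ⟨haE, hau, havv⟩ := (vertsE' a).1 hav'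
      have hax : a ≠ x := by rintro rfl; rw [hxiE'] at hai; exact one_ne_zero hai
      have hay : a ≠ y := by rintro rfl; rw [hyiE'] at hai; exact one_ne_zero hai
      rw [idegE'_eq a hax hay havv hau] at hai
      exact hru a ⟨haE, hai⟩
    · intro a hav'
      obtain ⟨haE, hau, havv⟩ := (vertsE' a).1 hav'
      by_cases hax : a = x
      · rw [hax]
        exact Or.inr (Or.inl ⟨hxiE', hxoE'⟩)
      by_cases hay : a = y
      · rw [hay]
        exact Or.inr (Or.inl ⟨hyiE', hyoE'⟩)
      by_cases haw : a = w
      · rw [haw, idegE'_eq w h_wx h_wy h_wv hwu, odegE'_w]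
        exact hdeg w (haw ▸ haE)
      by_cases hag : a = g
      · rw [hag, idegE'_eq g h_gx h_gy h_gv h_gu, odegE'_g]
        exact hdeg g (hag ▸ haE)
      · rw [idegE'_eq a hax hay havv hau, odegE'_eq a haw hag hau havv]
        exact hdeg a haE
  · rintro ⟨S', hSsub, hSverts, ⟨r', hr'v, hr'i, hr'deg, hr'reach⟩, hleaf⟩
    have hxvE' : x ∈ verts E' := mem_verts_snd hwxE'
    have hyvE' : y ∈ verts E' := mem_verts_snd hgyE'
    have hwvE' : w ∈ verts E' := mem_verts_fst hwxE'
    have hgvE' : g ∈ verts E' := mem_verts_fst hgyE'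
    have hSx_out : ∀ c, (x, c) ∉ S' := fun c hc => odeg_zero_notMem hxoE' (hSsub hc)
    have hSy_out : ∀ c, (y, c) ∉ S' := fun c hc => odeg_zero_notMem hyoE' (hSsub hc)
    have hr'x : r' ≠ x := by
      rintro rfl
      exact h_wx (reach_sink hSx_out (hr'reach w hwvE'))
    have hr'y : r' ≠ y := by
      rintro rfl
      exact h_gy (reach_sink hSy_out (hr'reach g hgvE'))
    have hwxS' : (w, x) ∈ S' := by
      obtain ⟨c, hc⟩ := ideg_exists ((hr'deg x hxvE' (Ne.symm hr'x)) ▸ one_ne_zero)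
      rcases (memE' c x).1 (hSsub hc) with ⟨rfl, _⟩ | ⟨_, h2⟩ | ⟨_, _, hn3, _, _, hm⟩
      · exact hc
      · exact absurd h2 h_xy
      · exact absurd ⟨uvx c hm, rfl⟩ hn3
    have hgyS' : (g, y) ∈ S' := by
      obtain ⟨c, hc⟩ := ideg_exists ((hr'deg y hyvE' (Ne.symm hr'y)) ▸ one_ne_zero)
      rcases (memE' c y).1 (hSsub hc) with ⟨_, h2⟩ | ⟨rfl, _⟩ | ⟨hn1, _, _, _, _, hm⟩
      · exact absurd h2.symm h_xy
      · exact hc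
      · exact absurd ⟨uuy c hm, rfl⟩ hn1
    obtain ⟨hr'E, hr'u, hr'v2⟩ := (vertsE' r').1 hr'v
    set S : Finset (A × A) := insert (g, u) (insert (u, y) (insert (w, v) (insert (v, x)
      ((S'.erase (w, x)).erase (g, y))))) with hSdef
    have memS : ∀ a b : A, (a, b) ∈ S ↔ (a = g ∧ b = u) ∨ (a = u ∧ b = y) ∨ (a = w ∧ b = v) ∨
        (a = v ∧ b = x) ∨ (¬(a = g ∧ b = y) ∧ ¬(a = w ∧ b = x) ∧ (a, b) ∈ S') := by
      intro a b
      rw [hSdef]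
      simp only [Finset.mem_insert, Finset.mem_erase, ne_eq, Prod.mk.injEq]
    have hguS : (g, u) ∈ S := (memS g u).2 (Or.inl ⟨rfl, rfl⟩)
    have huyS : (u, y) ∈ S := (memS u y).2 (Or.inr (Or.inl ⟨rfl, rfl⟩))
    have hwvS : (w, v) ∈ S := (memS w v).2 (Or.inr (Or.inr (Or.inl ⟨rfl, rfl⟩)))
    have hvxS : (v, x) ∈ S := (memS v x).2 (Or.inr (Or.inr (Or.inr (Or.inl ⟨rfl, rfl⟩))))
    have hSE : S ⊆ E := by
      rintro ⟨a, b⟩ hm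
      rcases (memS a b).1 hm with ⟨h1, h2⟩ | ⟨h1, h2⟩ | ⟨h1, h2⟩ | ⟨h1, h2⟩ | ⟨hn1, hn2, hm'⟩
      · subst h1; subst h2; exact hgu
      · subst h1; subst h2; exact huy
      · subst h1; subst h2; exact hwv
      · subst h1; subst h2; exact hvx
      · rcases (memE' a b).1 (hSsub hm') with ⟨h1, h2⟩ | ⟨h1, h2⟩ | ⟨_, _, _, _, _, hmE⟩
        · exact absurd ⟨h1, h2⟩ hn2
        · exact absurd ⟨h1, h2⟩ hn1
        · exact hmE
    refine ⟨S, hSE, ?_, ⟨r', hr'E, ?_, ?_, ?_⟩, ?_⟩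
    · apply Finset.Subset.antisymm (verts_mono hSE)
      intro a ha
      by_cases h1 : a = g
      · exact h1 ▸ mem_verts_fst hguS
      by_cases h2 : a = u
      · exact h2 ▸ mem_verts_snd hguS
      by_cases h3 : a = y
      · exact h3 ▸ mem_verts_snd huyS
      by_cases h4 : a = w
      · exact h4 ▸ mem_verts_fst hwvS
      by_cases h5 : a = v
      · exact h5 ▸ mem_verts_snd hwvS
      by_cases h6 : a = x
      · exact h6 ▸ mem_verts_snd hvxS
      have haE' : a ∈ verts S' := hSverts ▸ (vertsE' a).2 ⟨ha, h2, h5⟩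
      rcases mem_verts.1 haE' with ⟨b, hb⟩ | ⟨b, hb⟩
      · exact mem_verts_fst ((memS a b).2 (Or.inr (Or.inr (Or.inr (Or.inr
          ⟨fun hh => h1 hh.1, fun hh => h4 hh.1, hb⟩)))))
      · exact mem_verts_snd ((memS b a).2 (Or.inr (Or.inr (Or.inr (Or.inr
          ⟨fun hh => h3 hh.2, fun hh => h6 hh.2, hb⟩)))))
    · refine ideg_eq_zero fun c hc => ?_
      rcases (memS c r').1 hc with ⟨_, h2⟩ | ⟨_, h2⟩ | ⟨_, h2⟩ | ⟨_, h2⟩ | ⟨_, _, hm'⟩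
      · exact hr'u h2
      · exact hr'y h2
      · exact hr'v2 h2
      · exact hr'x h2
      · exact ideg_pos hm' hr'i
    · intro a haE har
      by_cases hau : a = u
      · rw [hau]
        refine ideg_filter_eq_one hguS fun c hc => ?_
        rcases (memS c u).1 hc with ⟨h1, _⟩ | ⟨_, h2⟩ | ⟨_, h2⟩ | ⟨_, h2⟩ | ⟨_, _, hm'⟩
        · exact h1
        · exact absurd h2 h_uy
        · exact absurd h2 h_uv
        · exact absurd h2 h_ux
        · rcases (memE' c u).1 (hSsub hm') with ⟨_, h2⟩ | ⟨_, h2⟩ | ⟨_, hn2, _, _, _, hm⟩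
          · exact absurd h2 h_ux
          · exact absurd h2 h_uy
          · exact absurd ⟨ugu c hm, rfl⟩ hn2
      by_cases hay : a = y
      · rw [hay]
        refine ideg_filter_eq_one huyS fun c hc => ?_
        rcases (memS c y).1 hc with ⟨_, h2⟩ | ⟨h1, _⟩ | ⟨_, h2⟩ | ⟨_, h2⟩ | ⟨hn1, _, hm'⟩
        · exact absurd h2 (Ne.symm h_uy)
        · exact h1
        · exact absurd h2 (Ne.symm h_vy)
        · exact absurd h2 (Ne.symm h_xy)
        · rcases (memE' c y).1 (hSsub hm') with ⟨_, h2⟩ | ⟨h1, _⟩ | ⟨hn1', _, _, _, _, hm⟩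
          · exact absurd h2.symm h_xy
          · exact absurd ⟨h1, rfl⟩ hn1
          · exact absurd ⟨uuy c hm, rfl⟩ hn1'
      by_cases hav2 : a = v
      · rw [hav2]
        refine ideg_filter_eq_one hwvS fun c hc => ?_
        rcases (memS c v).1 hc with ⟨_, h2⟩ | ⟨_, h2⟩ | ⟨h1, _⟩ | ⟨_, h2⟩ | ⟨_, _, hm'⟩
        · exact absurd h2 (Ne.symm h_uv)
        · exact absurd h2 h_vy
        · exact h1
        · exact absurd h2 h_vx
        · rcases (memE' c v).1 (hSsub hm') with ⟨_, h2⟩ | ⟨_, h2⟩ | ⟨_, _, _, hn4, hn5, hm⟩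
          · exact absurd h2 h_vx
          · exact absurd h2 h_vy
          · rcases uin_v c hm with rfl | rfl
            · exact absurd ⟨rfl, rfl⟩ hn5
            · exact absurd ⟨rfl, rfl⟩ hn4
      by_cases hax : a = x
      · rw [hax]
        refine ideg_filter_eq_one hvxS fun c hc => ?_
        rcases (memS c x).1 hc with ⟨_, h2⟩ | ⟨_, h2⟩ | ⟨_, h2⟩ | ⟨h1, _⟩ | ⟨_, hn2, hm'⟩
        · exact absurd h2 (Ne.symm h_ux)
        · exact absurd h2 h_xy
        · exact absurd h2 (Ne.symm h_vx)
        · exact h1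
        · rcases (memE' c x).1 (hSsub hm') with ⟨h1, _⟩ | ⟨_, h2⟩ | ⟨_, _, hn3, _, _, hm⟩
          · exact absurd ⟨h1, rfl⟩ hn2
          · exact absurd h2 h_xy
          · exact absurd ⟨uvx c hm, rfl⟩ hn3
      have hcongr : ideg S a = ideg S' a := by
        refine ideg_congr fun c => ?_
        rw [memS c a]
        constructor
        · rintro (⟨_, h2⟩ | ⟨_, h2⟩ | ⟨_, h2⟩ | ⟨_, h2⟩ | ⟨_, _, hm'⟩)
          · exact absurd h2 hau
          · exact absurd h2 hay
          · exact absurd h2 hav2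
          · exact absurd h2 hax
          · exact hm'
        · intro hm'
          exact Or.inr (Or.inr (Or.inr (Or.inr ⟨fun hh => hay hh.2, fun hh => hax hh.2, hm'⟩)))
      rw [hcongr]
      exact hr'deg a ((vertsE' a).2 ⟨haE, hau, hav2⟩) har
    · have transfer : ∀ a : A, Relation.ReflTransGen (Arc S') r' a →
          Relation.ReflTransGen (Arc S) r' a := by
        intro a h
        refine reflTransGen_subrel (fun c d hcd => ?_) h
        by_cases h1 : c = w ∧ d = x
        · obtain ⟨hc1, hc2⟩ := h1
          subst hc1; subst hc2
          exact Relation.ReflTransGen.head (b := v) hwvS (Relation.ReflTransGen.single hvxS)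
        · by_cases h2 : c = g ∧ d = y
          · obtain ⟨hc1, hc2⟩ := h2
            subst hc1; subst hc2
            exact Relation.ReflTransGen.head (b := u) hguS (Relation.ReflTransGen.single huyS)
          · exact Relation.ReflTransGen.single
              ((memS c d).2 (Or.inr (Or.inr (Or.inr (Or.inr ⟨h2, h1, hcd⟩)))))
      intro a haE
      by_cases hau : a = u
      · rw [hau]
        exact (transfer g (hr'reach g hgvE')).tail hguS
      by_cases hav2 : a = v
      · rw [hav2]
        exact (transfer w (hr'reach w hwvE')).tail hwvS
      exact transfer a (hr'reach a ((vertsE' a).2 ⟨haE, hau, hav2⟩))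
    · intro a haE h0
      by_cases hag : a = g
      · exact absurd h0 (hag ▸ odeg_pos hguS)
      by_cases hau : a = u
      · exact absurd h0 (hau ▸ odeg_pos huyS)
      by_cases haw : a = w
      · exact absurd h0 (haw ▸ odeg_pos hwvS)
      by_cases hav2 : a = v
      · exact absurd h0 (hav2 ▸ odeg_pos hvxS)
      by_cases hax : a = x
      · exact hax ▸ hxo
      by_cases hay : a = y
      · exact hay ▸ hyo
      have hcongr : odeg S' a = odeg S a := by
        refine odeg_congr fun c => ?_
        rw [memS a c]
        constructor
        · intro hm'
          exact Or.inr (Or.inr (Or.inr (Or.inr ⟨fun hh => hag hh.1, fun hh => haw hh.1, hm'⟩)))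
        · rintro (⟨h1, _⟩ | ⟨h1, _⟩ | ⟨h1, _⟩ | ⟨h1, _⟩ | ⟨_, _, hm'⟩)
          · exact absurd h1 hag
          · exact absurd h1 hau
          · exact absurd h1 haw
          · exact absurd h1 hav2
          · exact hm'
      rw [← hcongr] at h0
      have h1 : odeg E' a = 0 := hleaf a ((vertsE' a).2 ⟨haE, hau, hav2⟩) h0
      rw [← odegE'_eq a haw hag hau hav2]
      exact h1

lemma singleCherry_treeBased {F : Finset (A × A)} (h : IsSingleCherry F) : IsTreeBased F := by
  obtain ⟨r, x, y, hrx, hry, hxy, hF⟩ := h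
  subst hF
  have hrx' : (r, x) ∈ ({(r, x), (r, y)} : Finset (A × A)) := by simp
  have hry' : (r, y) ∈ ({(r, x), (r, y)} : Finset (A × A)) := by simp
  have memF : ∀ a b : A, (a, b) ∈ ({(r, x), (r, y)} : Finset (A × A)) ↔
      (a = r ∧ b = x) ∨ (a = r ∧ b = y) := by
    intro a b
    simp only [Finset.mem_insert, Finset.mem_singleton, Prod.mk.injEq]
  refine ⟨{(r, x), (r, y)}, Finset.Subset.refl _, rfl,
    ⟨r, mem_verts_fst hrx', ?_, ?_, ?_⟩, fun a _ h0 => h0⟩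
  · refine ideg_eq_zero fun c hc => ?_
    rcases (memF c r).1 hc with ⟨_, h2⟩ | ⟨_, h2⟩
    · exact hrx h2
    · exact hry h2
  · intro a ha har
    rcases mem_verts.1 ha with ⟨b, hb⟩ | ⟨b, hb⟩
    · rcases (memF a b).1 hb with ⟨h1, _⟩ | ⟨h1, _⟩ <;> exact absurd h1 har
    · rcases (memF b a).1 hb with ⟨_, h2⟩ | ⟨_, h2⟩
      · rw [h2]
        refine ideg_filter_eq_one hrx' fun c hc => ?_
        rcases (memF c x).1 hc with ⟨h1, _⟩ | ⟨_, h2'⟩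
        · exact h1
        · exact absurd h2' hxy
      · rw [h2]
        refine ideg_filter_eq_one hry' fun c hc => ?_
        rcases (memF c y).1 hc with ⟨_, h2'⟩ | ⟨h1, _⟩
        · exact absurd h2'.symm hxy
        · exact h1
  · intro a ha
    rcases mem_verts.1 ha with ⟨b, hb⟩ | ⟨b, hb⟩
    · rcases (memF a b).1 hb with ⟨h1, _⟩ | ⟨h1, _⟩
      · rw [h1]
      · rw [h1]
    · rcases (memF b a).1 hb with ⟨_, h2⟩ | ⟨_, h2⟩
      · rw [h2]; exact Relation.ReflTransGen.single hrx'
      · rw [h2]; exact Relation.ReflTransGen.single hry'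


/-- Every binary orchard network is tree-based. -/
theorem orchard_is_tree_based (E : Finset (A × A)) (hnet : IsDirBinNet E)
    (horch : IsOrchard E) : IsTreeBased E := by
  obtain ⟨F, hchain, hF⟩ := horch
  revert hnet
  induction hchain using Relation.ReflTransGen.head_induction_on with
  | refl => exact fun _ => singleCherry_treeBased hF
  | head hstep _ ih =>
    intro hnetA
    rcases hstep with hc | hr
    · obtain ⟨h1, h2⟩ := cherry_key hnetA hc
      exact h2 (ih h1)
    · obtain ⟨h1, h2⟩ := ret_key hnetA hr
      exact h2 (ih h1)
end

section
/- Let N be a directed binary phylogenetic network. If N is tree-child, then for every blob B of N the network induced by B is tree-child; conversely, if the network induced by every blob of N is tree-child, then N is tree-child. -/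
open Classical

variable {A : Type} [DecidableEq A]

/-- A network is tree-child if every non-leaf vertex has a child that is a tree
vertex (indegree `1`, outdegree `2`) or a leaf (indegree `1`, outdegree `0`). -/
def IsTreeChild (E : Finset (A × A)) : Prop :=
  ∀ a ∈ verts E, odeg E a ≠ 0 →
    ∃ b : A, (a, b) ∈ E ∧
      ((ideg E b = 1 ∧ odeg E b = 2) ∨ (ideg E b = 1 ∧ odeg E b = 0))

/-- Underlying undirected adjacency of the arc set `E`. -/
def UAdj (E : Finset (A × A)) (a b : A) : Prop :=
  a ≠ b ∧ ((a, b) ∈ E ∨ (b, a) ∈ E)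

/-- The (undirected) graph of `E` restricted to `S` is connected. -/
def ConnWithin (E : Finset (A × A)) (S : Finset A) : Prop :=
  ∀ a ∈ S, ∀ b ∈ S,
    Relation.ReflTransGen (fun x y => x ∈ S ∧ y ∈ S ∧ UAdj E x y) a b

/-- `B` is a biconnected set of vertices of `E`: at least two vertices, connected,
and still connected after removing any single vertex. -/
def IsBiconnectedD (E : Finset (A × A)) (B : Finset A) : Prop :=
  B ⊆ verts E ∧ 2 ≤ B.card ∧ ConnWithin E B ∧ ∀ x ∈ B, ConnWithin E (B.erase x)

/-- A blob: a maximal biconnected set with at least three vertices. -/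
def IsBlobD (E : Finset (A × A)) (B : Finset A) : Prop :=
  IsBiconnectedD E B ∧ (∀ B', IsBiconnectedD E B' → B ⊆ B' → B = B') ∧ 3 ≤ B.card

/-- The arcs of `E` lying inside `B`. -/
def arcsIn (E : Finset (A × A)) (B : Finset A) : Finset (A × A) :=
  E.filter fun p => p.1 ∈ B ∧ p.2 ∈ B

/-- The network induced by the blob `B`, using `f` to supply the new pendant
leaves: for each vertex of `B` of indegree `1` and outdegree `1`, or indegree `2`
and outdegree `0`, within `B`, a pendant leaf is attached. -/
noncomputable def inducedBlobNet (E : Finset (A × A)) (B : Finset A) (f : A → A) :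
    Finset (A × A) :=
  arcsIn E B ∪
    (B.filter fun a =>
        (ideg (arcsIn E B) a = 1 ∧ odeg (arcsIn E B) a = 1) ∨
        (ideg (arcsIn E B) a = 2 ∧ odeg (arcsIn E B) a = 0)).image
      fun a => (a, f a)

/-- `f` supplies fresh pairwise-distinct leaf labels outside the network. -/
def FreshLeaves (E : Finset (A × A)) (B : Finset A) (f : A → A) : Prop :=
  Set.InjOn f (B : Set A) ∧ ∀ a ∈ B, f a ∉ verts E

/-! ### Auxiliary lemmas -/

section AuxBasic

lemma odeg_pos_of_mem {E : Finset (A × A)} {a b : A} (h : (a, b) ∈ E) : 0 < odeg E a :=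
  Finset.card_pos.2 ⟨(a, b), Finset.mem_filter.2 ⟨h, rfl⟩⟩

lemma ideg_pos_of_mem {E : Finset (A × A)} {a b : A} (h : (a, b) ∈ E) : 0 < ideg E b :=
  Finset.card_pos.2 ⟨(a, b), Finset.mem_filter.2 ⟨h, rfl⟩⟩

lemma exists_out_of_odeg_ne_zero {E : Finset (A × A)} {a : A} (h : odeg E a ≠ 0) :
    ∃ b, (a, b) ∈ E := by
  obtain ⟨⟨x, y⟩, hp⟩ := Finset.card_pos.1 (Nat.pos_of_ne_zero h)
  rw [Finset.mem_filter] at hp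
  obtain ⟨h1, h2⟩ := hp
  exact ⟨y, by simpa [show x = a from h2] using h1⟩

lemma exists_in_of_ideg_ne_zero {E : Finset (A × A)} {b : A} (h : ideg E b ≠ 0) :
    ∃ a, (a, b) ∈ E := by
  obtain ⟨⟨x, y⟩, hp⟩ := Finset.card_pos.1 (Nat.pos_of_ne_zero h)
  rw [Finset.mem_filter] at hp
  obtain ⟨h1, h2⟩ := hp
  exact ⟨x, by simpa [show y = b from h2] using h1⟩

lemma parent_unique {E : Finset (A × A)} {b u v : A} (h : ideg E b = 1)
    (hu : (u, b) ∈ E) (hv : (v, b) ∈ E) : u = v := by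
  have := Finset.card_le_one.1 (le_of_eq h) (u, b) (Finset.mem_filter.2 ⟨hu, rfl⟩)
    (v, b) (Finset.mem_filter.2 ⟨hv, rfl⟩)
  exact congrArg Prod.fst this

lemma child_unique {E : Finset (A × A)} {a u v : A} (h : odeg E a = 1)
    (hu : (a, u) ∈ E) (hv : (a, v) ∈ E) : u = v := by
  have := Finset.card_le_one.1 (le_of_eq h) (a, u) (Finset.mem_filter.2 ⟨hu, rfl⟩)
    (a, v) (Finset.mem_filter.2 ⟨hv, rfl⟩)
  exact congrArg Prod.snd this

lemma two_le_ideg {E : Finset (A × A)} {b u v : A} (huv : u ≠ v)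
    (hu : (u, b) ∈ E) (hv : (v, b) ∈ E) : 2 ≤ ideg E b :=
  Finset.one_lt_card.2 ⟨(u, b), Finset.mem_filter.2 ⟨hu, rfl⟩,
    (v, b), Finset.mem_filter.2 ⟨hv, rfl⟩, by simp [huv]⟩

lemma two_le_odeg {E : Finset (A × A)} {a u v : A} (huv : u ≠ v)
    (hu : (a, u) ∈ E) (hv : (a, v) ∈ E) : 2 ≤ odeg E a :=
  Finset.one_lt_card.2 ⟨(a, u), Finset.mem_filter.2 ⟨hu, rfl⟩,
    (a, v), Finset.mem_filter.2 ⟨hv, rfl⟩, by simp [huv]⟩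

lemma exists_other_parent {E : Finset (A × A)} {a b : A} (h : ideg E b = 2)
    (hab : (a, b) ∈ E) : ∃ p, p ≠ a ∧ (p, b) ∈ E := by
  obtain ⟨x, hx, y, hy, hxy⟩ := Finset.one_lt_card.1 (by omega : 1 < ideg E b)
  rw [Finset.mem_filter] at hx hy
  by_cases hxa : x = (a, b)
  · refine ⟨y.1, ?_, ?_⟩
    · intro h'
      apply hxy
      rw [hxa]
      have : y = (y.1, y.2) := rfl
      rw [this, hy.2, h']
    · have : y = (y.1, y.2) := rfl
      rw [this, hy.2] at hy
      exact hy.1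
  · refine ⟨x.1, ?_, ?_⟩
    · intro h'
      apply hxa
      have : x = (x.1, x.2) := rfl
      rw [this, hx.2, h']
    · have : x = (x.1, x.2) := rfl
      rw [this, hx.2] at hx
      exact hx.1

lemma exists_two_children {E : Finset (A × A)} {a : A} (h : odeg E a = 2) :
    ∃ b c, b ≠ c ∧ (a, b) ∈ E ∧ (a, c) ∈ E := by
  obtain ⟨x, hx, y, hy, hxy⟩ := Finset.one_lt_card.1 (by omega : 1 < odeg E a)
  rw [Finset.mem_filter] at hx hy
  refine ⟨x.2, y.2, ?_, ?_, ?_⟩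
  · intro h'
    apply hxy
    have hx' : x = (x.1, x.2) := rfl
    have hy' : y = (y.1, y.2) := rfl
    rw [hx', hy', hx.2, hy.2, h']
  · have : x = (x.1, x.2) := rfl
    rw [this, hx.2] at hx
    exact hx.1
  · have : y = (y.1, y.2) := rfl
    rw [this, hy.2] at hy
    exact hy.1

lemma children_cases {E : Finset (A × A)} {a b c d : A} (h : odeg E a = 2)
    (hb : (a, b) ∈ E) (hc : (a, c) ∈ E) (hbc : b ≠ c) (hd : (a, d) ∈ E) :
    d = b ∨ d = c := by
  have hsub : ({(a, b), (a, c)} : Finset (A × A)) ⊆ E.filter fun p => p.1 = a := by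
    intro x hx
    rcases Finset.mem_insert.1 hx with rfl | hx
    · exact Finset.mem_filter.2 ⟨hb, rfl⟩
    · rw [Finset.mem_singleton.1 hx]
      exact Finset.mem_filter.2 ⟨hc, rfl⟩
  have hcard : (E.filter fun p => p.1 = a).card ≤ ({(a, b), (a, c)} : Finset (A × A)).card := by
    rw [Finset.card_insert_of_notMem (by simp [hbc]), Finset.card_singleton]
    exact le_of_eq h
  have heq := Finset.eq_of_subset_of_card_le hsub hcard
  have : (a, d) ∈ ({(a, b), (a, c)} : Finset (A × A)) := by
    rw [heq]; exact Finset.mem_filter.2 ⟨hd, rfl⟩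
  rcases Finset.mem_insert.1 this with h' | h'
  · exact Or.inl (congrArg Prod.snd h')
  · exact Or.inr (congrArg Prod.snd (Finset.mem_singleton.1 h'))

lemma parents_cases {E : Finset (A × A)} {a b c d : A} (h : ideg E a = 2)
    (hb : (b, a) ∈ E) (hc : (c, a) ∈ E) (hbc : b ≠ c) (hd : (d, a) ∈ E) :
    d = b ∨ d = c := by
  have hsub : ({(b, a), (c, a)} : Finset (A × A)) ⊆ E.filter fun p => p.2 = a := by
    intro x hx
    rcases Finset.mem_insert.1 hx with rfl | hx
    · exact Finset.mem_filter.2 ⟨hb, rfl⟩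
    · rw [Finset.mem_singleton.1 hx]
      exact Finset.mem_filter.2 ⟨hc, rfl⟩
  have hcard : (E.filter fun p => p.2 = a).card ≤ ({(b, a), (c, a)} : Finset (A × A)).card := by
    rw [Finset.card_insert_of_notMem (by simp [hbc]), Finset.card_singleton]
    exact le_of_eq h
  have heq := Finset.eq_of_subset_of_card_le hsub hcard
  have : (d, a) ∈ ({(b, a), (c, a)} : Finset (A × A)) := by
    rw [heq]; exact Finset.mem_filter.2 ⟨hd, rfl⟩
  rcases Finset.mem_insert.1 this with h' | h'
  · exact Or.inl (congrArg Prod.fst h')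
  · exact Or.inr (congrArg Prod.fst (Finset.mem_singleton.1 h'))

lemma arc_ne {E : Finset (A × A)} (hac : ∀ a : A, ¬ Relation.TransGen (Arc E) a a)
    {a b : A} (h : (a, b) ∈ E) : a ≠ b := by
  rintro rfl
  exact hac a (Relation.TransGen.single h)

lemma uadj_symm {E : Finset (A × A)} : Symmetric (UAdj E) :=
  fun _ _ h => ⟨h.1.symm, h.2.symm⟩

end AuxBasic

section AuxConn

lemma connWithin_union {E : Finset (A × A)} {S T : Finset A} (hS : ConnWithin E S)
    (hT : ConnWithin E T) {w : A} (hwS : w ∈ S) (hwT : w ∈ T) :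
    ConnWithin E (S ∪ T) := by
  have liftS : ∀ {a b : A}, a ∈ S → b ∈ S →
      Relation.ReflTransGen (fun x y => x ∈ S ∪ T ∧ y ∈ S ∪ T ∧ UAdj E x y) a b := by
    intro a b ha hb
    exact Relation.ReflTransGen.mono (fun x y hxy =>
      ⟨Finset.mem_union_left _ hxy.1, Finset.mem_union_left _ hxy.2.1, hxy.2.2⟩) _ _ (hS a ha b hb)
  have liftT : ∀ {a b : A}, a ∈ T → b ∈ T →
      Relation.ReflTransGen (fun x y => x ∈ S ∪ T ∧ y ∈ S ∪ T ∧ UAdj E x y) a b := by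
    intro a b ha hb
    exact Relation.ReflTransGen.mono (fun x y hxy =>
      ⟨Finset.mem_union_right _ hxy.1, Finset.mem_union_right _ hxy.2.1, hxy.2.2⟩) _ _ (hT a ha b hb)
  intro a ha b hb
  rcases Finset.mem_union.1 ha with ha | ha <;> rcases Finset.mem_union.1 hb with hb | hb
  · exact liftS ha hb
  · exact (liftS ha hwS).trans (liftT hwT hb)
  · exact (liftT ha hwT).trans (liftS hwS hb)
  · exact liftT ha hb

lemma exists_uadj_of_conn {E : Finset (A × A)} {S : Finset A} (h : ConnWithin E S)
    {v u : A} (hv : v ∈ S) (hu : u ∈ S) (hne : v ≠ u) : ∃ w ∈ S, UAdj E v w := by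
  rcases (h v hv u hu).cases_head with h' | ⟨c, ⟨_, hcS, hadj⟩, _⟩
  · exact absurd h' hne
  · exact ⟨c, hcS, hadj⟩

lemma subset_verts_of_conn {E : Finset (A × A)} {S : Finset A} (h : ConnWithin E S)
    (h2 : 2 ≤ S.card) : S ⊆ verts E := by
  intro v hv
  obtain ⟨u, hu, hne⟩ := Finset.exists_mem_ne (show 1 < S.card by omega) v
  obtain ⟨w, _, hadj⟩ := exists_uadj_of_conn h hv hu (Ne.symm hne)
  rcases hadj.2 with h' | h'
  · exact mem_verts_fst h'
  · exact mem_verts_snd h'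

lemma two_neighbors_in_bicon {E : Finset (A × A)} {B : Finset A}
    (hB : IsBiconnectedD E B) (h3 : 3 ≤ B.card) {v : A} (hv : v ∈ B) :
    ∃ w₁ w₂, w₁ ∈ B ∧ w₂ ∈ B ∧ w₁ ≠ w₂ ∧ UAdj E v w₁ ∧ UAdj E v w₂ := by
  obtain ⟨hsub, hcard, hconn, herase⟩ := hB
  obtain ⟨u, hu, hne⟩ := Finset.exists_mem_ne (by omega : 1 < B.card) v
  obtain ⟨w, hwB, hw⟩ := exists_uadj_of_conn hconn hv hu (Ne.symm hne)
  have hvw : v ≠ w := hw.1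
  have hconn' := herase w hwB
  have hv' : v ∈ B.erase w := Finset.mem_erase.2 ⟨hvw, hv⟩
  have hcard' : 1 < (B.erase w).card := by
    rw [Finset.card_erase_of_mem hwB]; omega
  obtain ⟨u', hu', hne'⟩ := Finset.exists_mem_ne hcard' v
  obtain ⟨w', hw'B, hw'⟩ := exists_uadj_of_conn hconn' hv' hu' (Ne.symm hne')
  exact ⟨w, w', hwB, (Finset.mem_erase.1 hw'B).2,
    fun h => (Finset.mem_erase.1 hw'B).1 h.symm, hw, hw'⟩

lemma chain_conn_head {E : Finset (A × A)} {S : Finset A} :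
    ∀ {a : A} {l : List A}, List.Chain (UAdj E) a l → a ∈ S → (∀ x ∈ l, x ∈ S) →
      ∀ x ∈ l, Relation.ReflTransGen (fun u v => u ∈ S ∧ v ∈ S ∧ UAdj E u v) a x := by
  intro a l
  induction l generalizing a with
  | nil => intro _ _ _ x hx; cases hx
  | cons b t ih =>
    intro h ha hl x hx
    unfold List.Chain at h
    rw [List.chain_cons] at h
    have hb : b ∈ S := hl b (List.mem_cons_self)
    have step1 : Relation.ReflTransGen (fun u v => u ∈ S ∧ v ∈ S ∧ UAdj E u v) a b :=
      Relation.ReflTransGen.single ⟨ha, hb, h.1⟩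
    rcases List.mem_cons.1 hx with rfl | hx
    · exact step1
    · exact step1.trans (ih h.2 hb (fun y hy => hl y (List.mem_cons_of_mem _ hy)) x hx)

lemma conn_of_chain {E : Finset (A × A)} {S : Finset A} {l : List A}
    (hch : List.Chain' (UAdj E) l) (hl : ∀ x ∈ l, x ∈ S) :
    ∀ x ∈ l, ∀ y ∈ l,
      Relation.ReflTransGen (fun u v => u ∈ S ∧ v ∈ S ∧ UAdj E u v) x y := by
  have hsymm : Symmetric fun u v => u ∈ S ∧ v ∈ S ∧ UAdj E u v :=
    fun u v h => ⟨h.2.1, h.1, uadj_symm h.2.2⟩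
  intro x hx y hy
  cases l with
  | nil => cases hx
  | cons a t =>
    have hch' : List.Chain (UAdj E) a t := hch
    have ha : a ∈ S := hl a (List.mem_cons_self)
    have key : ∀ z ∈ a :: t, Relation.ReflTransGen
        (fun u v => u ∈ S ∧ v ∈ S ∧ UAdj E u v) a z := by
      intro z hz
      rcases List.mem_cons.1 hz with rfl | hz
      · exact Relation.ReflTransGen.refl
      · exact chain_conn_head hch' ha (fun w hw => hl w (List.mem_cons_of_mem _ hw)) z hz
    exact (haveI : Std.Symm (fun u v => u ∈ S ∧ v ∈ S ∧ UAdj E u v) := ⟨hsymm⟩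
      Std.Symm.symm _ _ (key x hx)).trans (key y hy)

end AuxConn

section AuxCycle

lemma cycle_bicon {E : Finset (A × A)} {v : A} {t : List A}
    (hch : List.Chain' (UAdj E) (v :: t ++ [v]))
    (hnd : (v :: t).Nodup) (hlen : 2 ≤ (v :: t).length) :
    IsBiconnectedD E (v :: t).toFinset := by
  set K : List A := v :: t with hK
  have hchKv : List.Chain' (UAdj E) (K ++ [v]) := by simpa [hK] using hch
  have hchK : List.Chain' (UAdj E) K := hchKv.prefix ⟨[v], rfl⟩
  have hcard : K.toFinset.card = K.length := List.toFinset_card_of_nodup hnd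
  have hconn : ConnWithin E K.toFinset := by
    intro a ha b hb
    exact conn_of_chain hchK (fun y hy => List.mem_toFinset.2 hy) a
      (List.mem_toFinset.1 ha) b (List.mem_toFinset.1 hb)
  have hsubv : K.toFinset ⊆ verts E := subset_verts_of_conn hconn (by omega)
  refine ⟨hsubv, by omega, hconn, ?_⟩
  intro x hx
  have hxK : x ∈ K := List.mem_toFinset.1 hx
  obtain ⟨K1, K2, hsplit⟩ := List.append_of_mem hxK
  have hnd' : (K1 ++ x :: K2).Nodup := hsplit ▸ hnd
  rw [List.nodup_append] at hnd'
  obtain ⟨nd1, nd2, hdisj⟩ := hnd'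
  have hx1 : x ∉ K1 := fun h => hdisj x h x List.mem_cons_self rfl
  have hx2 : x ∉ K2 := (List.nodup_cons.1 nd2).1
  have hch2 : List.Chain' (UAdj E) (K1 ++ (x :: (K2 ++ [v]))) := by
    have h0 := hchKv
    rw [hsplit] at h0
    simpa [List.append_assoc] using h0
  unfold List.Chain' at hch2
  rw [List.isChain_append] at hch2
  obtain ⟨chK1, chx, _⟩ := hch2
  rw [List.isChain_cons] at chx
  obtain ⟨_, chK2v⟩ := chx
  rw [List.isChain_append] at chK2v
  obtain ⟨chK2, _, juncK2⟩ := chK2v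
  have chM : List.Chain' (UAdj E) (K2 ++ K1) := by
    unfold List.Chain'
    rw [List.isChain_append]
    refine ⟨chK2, chK1, ?_⟩
    intro p hp q hq
    cases K1 with
    | nil => simp at hq
    | cons a K1' =>
      have hav : v = a := by
        have h1 : some v = some a := by
          simpa [hK] using congrArg List.head? hsplit
        exact Option.some.inj h1
      have hqa : a = q := by simpa using hq
      subst hqa
      rw [← hav]
      exact juncK2 p hp v (by simp)
  have hMset : (K2 ++ K1).toFinset = K.toFinset.erase x := by
    ext y
    simp only [List.toFinset_append, Finset.mem_union, List.mem_toFinset, Finset.mem_erase,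
      hsplit, List.mem_append, List.mem_cons]
    constructor
    · rintro (h | h)
      · exact ⟨fun hyx => hx2 (hyx ▸ h), Or.inr (Or.inr h)⟩
      · exact ⟨fun hyx => hx1 (hyx ▸ h), Or.inl h⟩
    · rintro ⟨hyx, (h | h | h)⟩
      · exact Or.inr h
      · exact absurd h hyx
      · exact Or.inl h
  intro a ha b hb
  rw [← hMset] at ha hb ⊢
  exact conn_of_chain chM (fun y hy => List.mem_toFinset.2 hy) a
    (List.mem_toFinset.1 ha) b (List.mem_toFinset.1 hb)

end AuxCycle

section AuxPath

lemma mem_of_getLast?' {l : List A} {a : A} (h : l.getLast? = some a) : a ∈ l := by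
  induction l with
  | nil => simp at h
  | cons b t ih =>
    cases t with
    | nil => simp at h; simp [h]
    | cons c t' =>
      rw [List.getLast?_cons_cons] at h
      exact List.mem_cons_of_mem _ (ih h)

lemma chain_arc_transGen {E : Finset (A × A)} :
    ∀ {a : A} {l : List A}, List.Chain (Arc E) a l → ∀ x ∈ l,
      Relation.TransGen (Arc E) a x := by
  intro a l
  induction l generalizing a with
  | nil => intro _ x hx; cases hx
  | cons b t ih =>
    intro h x hx
    unfold List.Chain at h
    rw [List.chain_cons] at h
    rcases List.mem_cons.1 hx with rfl | hx
    · exact Relation.TransGen.single h.1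
    · exact (Relation.TransGen.single h.1).trans (ih h.2 x hx)

lemma nodup_of_arc_chain {E : Finset (A × A)}
    (hac : ∀ a : A, ¬ Relation.TransGen (Arc E) a a) :
    ∀ {l : List A}, List.Chain' (Arc E) l → l.Nodup := by
  intro l
  induction l with
  | nil => intro _; simp
  | cons a t ih =>
    intro h
    have h' : List.Chain (Arc E) a t := h
    rw [List.nodup_cons]
    refine ⟨fun hmem => hac a (chain_arc_transGen h' a hmem), ih h.tail⟩

lemma rtg_last_of_chain {E : Finset (A × A)} :
    ∀ {l : List A} {w : A}, List.Chain' (Arc E) l → l.getLast? = some w →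
      ∀ v ∈ l, Relation.ReflTransGen (Arc E) v w := by
  intro l
  induction l with
  | nil => intro w _ h; simp at h
  | cons a t ih =>
    intro w hch hlast v hv
    cases t with
    | nil =>
      simp at hlast hv
      rw [hv, hlast]
    | cons b t' =>
      have hch' : List.Chain' (Arc E) (b :: t') := hch.tail
      have hab : Arc E a b := (List.isChain_cons_cons.1 hch).1
      have hlast' : (b :: t').getLast? = some w := by
        rwa [List.getLast?_cons_cons] at hlast
      rcases List.mem_cons.1 hv with rfl | hv
      · exact (Relation.ReflTransGen.single hab).trans (ih hch' hlast' b (by simp))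
      · exact ih hch' hlast' v hv

lemma exists_path_from_source {E : Finset (A × A)}
    (hac : ∀ a : A, ¬ Relation.TransGen (Arc E) a a) :
    ∀ v ∈ verts E, ∃ (u : A) (l : List A), u ∈ verts E ∧ ideg E u = 0 ∧
      List.Chain' (Arc E) l ∧ l.head? = some u ∧ l.getLast? = some v := by
  classical
  have main : ∀ (n : ℕ) (v : A), v ∈ verts E →
      ((verts E).filter fun u => Relation.TransGen (Arc E) u v).card = n →
      ∃ (u : A) (l : List A), u ∈ verts E ∧ ideg E u = 0 ∧
        List.Chain' (Arc E) l ∧ l.head? = some u ∧ l.getLast? = some v := by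
    intro n
    induction n using Nat.strong_induction_on with
    | _ n ih =>
      intro v hv hcard
      by_cases h0 : ideg E v = 0
      · exact ⟨v, [v], hv, h0, List.IsChain.singleton v, by simp, by simp⟩
      · obtain ⟨u, hu⟩ := exists_in_of_ideg_ne_zero h0
        have huv : u ∈ verts E := mem_verts_fst hu
        have hss : ((verts E).filter fun w => Relation.TransGen (Arc E) w u) ⊂
            ((verts E).filter fun w => Relation.TransGen (Arc E) w v) := by
          constructor
          · intro w hw
            rw [Finset.mem_filter] at hw ⊢
            exact ⟨hw.1, hw.2.tail hu⟩
          · intro hcon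
            have : u ∈ (verts E).filter fun w => Relation.TransGen (Arc E) w u :=
              hcon (Finset.mem_filter.2 ⟨huv, Relation.TransGen.single hu⟩)
            exact hac u (Finset.mem_filter.1 this).2
        have hlt := Finset.card_lt_card hss
        rw [hcard] at hlt
        obtain ⟨w, l, hw1, hw2, hch, hh, hl⟩ := ih _ hlt u huv rfl
        refine ⟨w, l ++ [v], hw1, hw2, ?_, ?_, by simp⟩
        · unfold List.Chain'
          rw [List.isChain_append]
          refine ⟨hch, by simp, ?_⟩
          intro p hp q hq
          rw [hl] at hp
          simp at hp hq
          subst hp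
          subst hq
          exact hu
        · have hlne : l ≠ [] := by
            intro h; rw [h] at hh; simp at hh
          rw [List.head?_append]
          cases hl' : l.head? with
          | none => rw [hl'] at hh; simp at hh
          | some z => rw [hl'] at hh; simp [Option.or_some]; simpa using hh
  intro v hv
  exact main _ v hv rfl

end AuxPath

section AuxMinPaths

lemma exists_min_paths {E : Finset (A × A)}
    (hac : ∀ a : A, ¬ Relation.TransGen (Arc E) a a)
    (hroot : ∃! r : A, r ∈ verts E ∧ ideg E r = 0)
    {a p : A} (ha : a ∈ verts E) (hp : p ∈ verts E) :
    ∃ (r : A) (P Q : List A), P.head? = some r ∧ Q.head? = some r ∧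
      P.getLast? = some a ∧ Q.getLast? = some p ∧
      List.Chain' (Arc E) P ∧ List.Chain' (Arc E) Q ∧
      (∀ v, v ∈ P → v ∈ Q → v = r) := by
  classical
  set Pred : ℕ → Prop := fun n => ∃ (r : A) (P Q : List A), P.head? = some r ∧
    Q.head? = some r ∧ P.getLast? = some a ∧ Q.getLast? = some p ∧
    List.Chain' (Arc E) P ∧ List.Chain' (Arc E) Q ∧ P.length + Q.length = n with hPred
  have hex : ∃ n, Pred n := by
    obtain ⟨u1, l1, hu1v, hu10, hch1, hh1, hl1⟩ := exists_path_from_source hac a ha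
    obtain ⟨u2, l2, hu2v, hu20, hch2, hh2, hl2⟩ := exists_path_from_source hac p hp
    obtain ⟨r, _, huniq⟩ := hroot
    have e1 : u1 = r := huniq u1 ⟨hu1v, hu10⟩
    have e2 : u2 = r := huniq u2 ⟨hu2v, hu20⟩
    exact ⟨l1.length + l2.length, r, l1, l2, e1 ▸ hh1, e2 ▸ hh2, hl1, hl2, hch1, hch2, rfl⟩
  obtain ⟨r, P, Q, h1, h2, h3, h4, h5, h6, h7⟩ := Nat.find_spec hex
  refine ⟨r, P, Q, h1, h2, h3, h4, h5, h6, ?_⟩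
  intro v hvP hvQ
  by_contra hvr
  obtain ⟨s1, t1, hP⟩ := List.append_of_mem hvP
  obtain ⟨s2, t2, hQ⟩ := List.append_of_mem hvQ
  have hs2ne : s2 ≠ [] := by
    rintro rfl
    simp at hQ
    rw [hQ] at h2
    simp at h2
    exact hvr h2
  have hlast1 : (v :: t1).getLast? = some a := by
    rw [hP, List.getLast?_append] at h3
    cases hl : (v :: t1).getLast? with
    | none => simp at hl
    | some z =>
      rw [hl] at h3
      simp [Option.or_some] at h3
      simp [h3]
  have hlast2 : (v :: t2).getLast? = some p := by
    rw [hQ, List.getLast?_append] at h4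
    cases hl : (v :: t2).getLast? with
    | none => simp at hl
    | some z =>
      rw [hl] at h4
      simp [Option.or_some] at h4
      simp [h4]
  have hch1' : List.Chain' (Arc E) (v :: t1) := h5.suffix ⟨s1, hP.symm⟩
  have hch2' : List.Chain' (Arc E) (v :: t2) := h6.suffix ⟨s2, hQ.symm⟩
  have hlen : (v :: t1).length + (v :: t2).length < Nat.find hex := by
    have e1 : P.length = s1.length + (t1.length + 1) := by rw [hP]; simp
    have e2 : Q.length = s2.length + (t2.length + 1) := by rw [hQ]; simp
    have hs2 : 0 < s2.length := List.length_pos_iff.2 hs2ne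
    have := h7
    simp only [List.length_cons]
    omega
  exact Nat.find_min hex hlen ⟨v, v :: t1, v :: t2, rfl, rfl, hlast1, hlast2, hch1', hch2', rfl⟩

end AuxMinPaths

section AuxBiconCycle

lemma exists_bicon_cycle {E : Finset (A × A)}
    (hac : ∀ a : A, ¬ Relation.TransGen (Arc E) a a)
    (hroot : ∃! r : A, r ∈ verts E ∧ ideg E r = 0)
    {a p b : A} (hab : (a, b) ∈ E) (hpb : (p, b) ∈ E) (hap : a ≠ p) :
    ∃ C : Finset A, IsBiconnectedD E C ∧ a ∈ C ∧ p ∈ C ∧ b ∈ C := by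
  obtain ⟨r, P, Q, h1, h2, h3, h4, h5, h6, hdisj⟩ :=
    exists_min_paths hac hroot (mem_verts_fst hab) (mem_verts_fst hpb)
  obtain ⟨Pt, rfl⟩ : ∃ Pt, P = r :: Pt := by
    cases P with
    | nil => simp at h1
    | cons x Pt => exact ⟨Pt, by simpa using (by simpa using h1 : x = r) ▸ rfl⟩
  obtain ⟨Qt, rfl⟩ : ∃ Qt, Q = r :: Qt := by
    cases Q with
    | nil => simp at h2
    | cons x Qt => exact ⟨Qt, by simpa using (by simpa using h2 : x = r) ▸ rfl⟩
  have ndP : (r :: Pt).Nodup := nodup_of_arc_chain hac h5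
  have ndQ : (r :: Qt).Nodup := nodup_of_arc_chain hac h6
  have hbP : b ∉ (r :: Pt) := by
    intro hmem
    exact hac b (Relation.TransGen.tail' (rtg_last_of_chain h5 h3 b hmem) hab)
  have hbQ : b ∉ (r :: Qt) := by
    intro hmem
    exact hac b (Relation.TransGen.tail' (rtg_last_of_chain h6 h4 b hmem) hpb)
  have haP : a ∈ (r :: Pt) := mem_of_getLast?' h3
  have hpQ : p ∈ (r :: Qt) := mem_of_getLast?' h4
  -- the cycle list
  set t : List A := Pt ++ b :: Qt.reverse with ht
  have huadjP : List.Chain' (UAdj E) (r :: Pt) :=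
    h5.imp fun x y h => ⟨arc_ne hac h, Or.inl h⟩
  have huadjQrev : List.Chain' (UAdj E) (r :: Qt).reverse := by
    unfold List.Chain'
    rw [List.isChain_reverse]
    exact h6.imp fun x y h => ⟨(arc_ne hac h).symm, Or.inr h⟩
  have hchain : List.Chain' (UAdj E) (r :: t ++ [r]) := by
    have heq : r :: t ++ [r] = (r :: Pt) ++ (b :: (r :: Qt).reverse) := by
      simp [ht, List.reverse_cons]
    rw [heq]
    unfold List.Chain'
    rw [List.isChain_append]
    refine ⟨huadjP, ?_, ?_⟩
    · rw [List.isChain_cons]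
      refine ⟨?_, huadjQrev⟩
      intro y hy
      rw [List.head?_reverse, h4] at hy
      simp at hy
      rw [← hy]
      exact ⟨(arc_ne hac hpb).symm, Or.inr hpb⟩
    · intro x hx y hy
      rw [h3] at hx
      simp at hx hy
      rw [← hx, ← hy]
      exact ⟨arc_ne hac hab, Or.inl hab⟩
  have hnd : (r :: t).Nodup := by
    have : r :: t = (r :: Pt) ++ (b :: Qt.reverse) := by simp [ht]
    rw [this]
    refine List.Nodup.append ndP ?_ ?_
    · rw [List.nodup_cons]
      refine ⟨fun h => hbQ (by simpa using List.mem_cons_of_mem r (List.mem_reverse.1 h)), ?_⟩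
      rw [List.nodup_reverse]
      exact ndQ.of_cons
    · intro x hxP hx2
      rcases List.mem_cons.1 hx2 with rfl | hx2
      · exact hbP hxP
      · have hxQ : x ∈ r :: Qt := List.mem_cons_of_mem r (List.mem_reverse.1 hx2)
        have hxr : x = r := hdisj x hxP hxQ
        subst hxr
        exact (List.nodup_cons.1 ndQ).1 (List.mem_reverse.1 hx2)
  have hlen : 2 ≤ (r :: t).length := by simp [ht]; omega
  have hbic := cycle_bicon hchain hnd hlen
  refine ⟨(r :: t).toFinset, hbic, ?_, ?_, ?_⟩
  · rcases List.mem_cons.1 haP with rfl | haP'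
    · simp
    · simp [ht, haP']
  · rcases List.mem_cons.1 hpQ with rfl | hpQ'
    · simp
    · simp [ht, hpQ']
  · simp [ht]

end AuxBiconCycle

section AuxBlob

lemma bicon_union {E : Finset (A × A)} {S T : Finset A} (hS : IsBiconnectedD E S)
    (hT : IsBiconnectedD E T) {x y : A} (hxS : x ∈ S) (hxT : x ∈ T)
    (hyS : y ∈ S) (hyT : y ∈ T) (hxy : x ≠ y) :
    IsBiconnectedD E (S ∪ T) := by
  refine ⟨Finset.union_subset hS.1 hT.1,
    le_trans hS.2.1 (Finset.card_le_card Finset.subset_union_left),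
    connWithin_union hS.2.2.1 hT.2.2.1 hxS hxT, ?_⟩
  intro z hz
  rw [Finset.erase_union_distrib]
  obtain ⟨w, hwS, hwT, hwz⟩ : ∃ w, w ∈ S ∧ w ∈ T ∧ w ≠ z := by
    rcases eq_or_ne x z with rfl | h
    · exact ⟨y, hyS, hyT, fun h' => hxy h'.symm⟩
    · exact ⟨x, hxS, hxT, h⟩
  have hconnS : ConnWithin E (S.erase z) := by
    by_cases hzS : z ∈ S
    · exact hS.2.2.2 z hzS
    · rw [Finset.erase_eq_of_notMem hzS]; exact hS.2.2.1
  have hconnT : ConnWithin E (T.erase z) := by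
    by_cases hzT : z ∈ T
    · exact hT.2.2.2 z hzT
    · rw [Finset.erase_eq_of_notMem hzT]; exact hT.2.2.1
  exact connWithin_union hconnS hconnT (Finset.mem_erase.2 ⟨hwz, hwS⟩)
    (Finset.mem_erase.2 ⟨hwz, hwT⟩)

lemma exists_blob_containing {E : Finset (A × A)} {C : Finset A}
    (hC : IsBiconnectedD E C) (h3 : 3 ≤ C.card) :
    ∃ B : Finset A, IsBlobD E B ∧ C ⊆ B := by
  classical
  set 𝒮 := (verts E).powerset.filter (fun B => IsBiconnectedD E B ∧ C ⊆ B) with h𝒮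
  have hmem : C ∈ 𝒮 := by
    rw [h𝒮, Finset.mem_filter, Finset.mem_powerset]
    exact ⟨hC.1, hC, Finset.Subset.refl C⟩
  obtain ⟨B, hB, hmax⟩ := Finset.exists_max_image 𝒮 Finset.card ⟨C, hmem⟩
  rw [h𝒮, Finset.mem_filter, Finset.mem_powerset] at hB
  obtain ⟨hBv, hBbic, hCB⟩ := hB
  refine ⟨B, ⟨hBbic, ?_, le_trans h3 (Finset.card_le_card hCB)⟩, hCB⟩
  intro B' hB' hsub
  have hmem' : B' ∈ 𝒮 := by
    rw [h𝒮, Finset.mem_filter, Finset.mem_powerset]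
    exact ⟨hB'.1, hB', hCB.trans hsub⟩
  exact Finset.eq_of_subset_of_card_le hsub (hmax B' hmem')

lemma blob_retic_parents {E : Finset (A × A)}
    (hac : ∀ a : A, ¬ Relation.TransGen (Arc E) a a)
    (hroot : ∃! r : A, r ∈ verts E ∧ ideg E r = 0)
    {B : Finset A} (hB : IsBlobD E B) {b : A} (hbB : b ∈ B)
    (hideg : ideg E b = 2) (hodeg : odeg E b = 1) :
    ∀ u, (u, b) ∈ E → u ∈ B := by
  obtain ⟨u0, hu0⟩ := exists_in_of_ideg_ne_zero (by omega : ideg E b ≠ 0)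
  obtain ⟨p0, hp0ne, hp0⟩ := exists_other_parent hideg hu0
  -- find a parent of b inside B
  obtain ⟨w₁, w₂, hw1B, hw2B, hne, hadj1, hadj2⟩ :=
    two_neighbors_in_bicon hB.1 hB.2.2 hbB
  have hparent : ∃ q, q ∈ B ∧ (q, b) ∈ E := by
    rcases hadj1.2 with h1 | h1
    · rcases hadj2.2 with h2 | h2
      · exact absurd (child_unique hodeg h1 h2) hne
      · exact ⟨w₂, hw2B, h2⟩
    · exact ⟨w₁, hw1B, h1⟩
  obtain ⟨q, hqB, hqb⟩ := hparent
  obtain ⟨C, hCbic, hu0C, hp0C, hbC⟩ := exists_bicon_cycle hac hroot hu0 hp0 (Ne.symm hp0ne)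
  have hqC : q ∈ C := by
    rcases parents_cases hideg hu0 hp0 (Ne.symm hp0ne) hqb with rfl | rfl
    · exact hu0C
    · exact hp0C
  have hqb' : q ≠ b := arc_ne hac hqb
  have hunion : IsBiconnectedD E (B ∪ C) :=
    bicon_union hB.1 hCbic hbB hbC hqB hqC (Ne.symm hqb')
  have heq : B = B ∪ C := hB.2.1 _ hunion Finset.subset_union_left
  have hCB : C ⊆ B := by rw [heq]; exact Finset.subset_union_right
  intro u hub
  rcases parents_cases hideg hu0 hp0 (Ne.symm hp0ne) hub with rfl | rfl
  · exact hCB hu0C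
  · exact hCB hp0C

end AuxBlob

section AuxInduced

def GoodPend (E : Finset (A × A)) (B : Finset A) (a : A) : Prop :=
  (ideg (arcsIn E B) a = 1 ∧ odeg (arcsIn E B) a = 1) ∨
  (ideg (arcsIn E B) a = 2 ∧ odeg (arcsIn E B) a = 0)

lemma mem_arcsIn {E : Finset (A × A)} {B : Finset A} {x y : A} :
    (x, y) ∈ arcsIn E B ↔ (x, y) ∈ E ∧ x ∈ B ∧ y ∈ B := by
  simp [arcsIn, Finset.mem_filter]

lemma mem_induced {E : Finset (A × A)} {B : Finset A} {f : A → A} {x y : A} :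
    (x, y) ∈ inducedBlobNet E B f ↔
      (x, y) ∈ arcsIn E B ∨ (x ∈ B ∧ GoodPend E B x ∧ y = f x) := by
  simp only [inducedBlobNet, Finset.mem_union, Finset.mem_image, Finset.mem_filter]
  constructor
  · rintro (h | ⟨a, ⟨haB, hg⟩, heq⟩)
    · exact Or.inl h
    · have h1 : a = x := congrArg Prod.fst heq
      have h2 : f a = y := congrArg Prod.snd heq
      subst h1
      exact Or.inr ⟨haB, hg, h2.symm⟩
  · rintro (h | ⟨hxB, hg, rfl⟩)
    · exact Or.inl h
    · exact Or.inr ⟨x, ⟨hxB, hg⟩, rfl⟩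

lemma ideg_arcsIn_le {E : Finset (A × A)} {B : Finset A} {v : A} :
    ideg (arcsIn E B) v ≤ ideg E v :=
  Finset.card_le_card (Finset.filter_subset_filter _ (Finset.filter_subset _ _))

lemma odeg_arcsIn_le {E : Finset (A × A)} {B : Finset A} {v : A} :
    odeg (arcsIn E B) v ≤ odeg E v :=
  Finset.card_le_card (Finset.filter_subset_filter _ (Finset.filter_subset _ _))

lemma ideg_induced_of_memB {E : Finset (A × A)} {B : Finset A} {f : A → A}
    (hfr : FreshLeaves E B f) (hBv : B ⊆ verts E) {v : A} (hv : v ∈ B) :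
    ideg (inducedBlobNet E B f) v = ideg (arcsIn E B) v := by
  unfold ideg
  congr 1
  apply Finset.ext
  rintro ⟨x, y⟩
  simp only [Finset.mem_filter, mem_induced]
  constructor
  · rintro ⟨h | ⟨hxB, _, rfl⟩, hy⟩
    · exact ⟨h, hy⟩
    · exfalso
      have : f x ∈ B := by rw [show f x = v from hy]; exact hv
      exact hfr.2 x hxB (hBv this)
  · exact fun ⟨h, hy⟩ => ⟨Or.inl h, hy⟩

lemma odeg_induced_of_not_memB {E : Finset (A × A)} {B : Finset A} {f : A → A}
    {v : A} (hv : v ∉ B) : odeg (inducedBlobNet E B f) v = 0 := by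
  rw [odeg, Finset.card_eq_zero, Finset.eq_empty_iff_forall_notMem]
  rintro ⟨x, y⟩ hmem
  rw [Finset.mem_filter] at hmem
  obtain ⟨hmem, hx⟩ := hmem
  rcases mem_induced.1 hmem with h | ⟨hxB, _, _⟩
  · exact hv (by rw [← show x = v from hx]; exact (mem_arcsIn.1 h).2.1)
  · exact hv (by rw [← show x = v from hx]; exact hxB)

lemma odeg_induced_of_not_good {E : Finset (A × A)} {B : Finset A} {f : A → A}
    {v : A} (hng : ¬ GoodPend E B v) :
    odeg (inducedBlobNet E B f) v = odeg (arcsIn E B) v := by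
  unfold odeg
  congr 1
  apply Finset.ext
  rintro ⟨x, y⟩
  simp only [Finset.mem_filter, mem_induced]
  constructor
  · rintro ⟨h | ⟨hxB, hg, rfl⟩, hx⟩
    · exact ⟨h, hx⟩
    · exact absurd (by rw [show x = v from hx] at hg; exact hg) hng
  · exact fun ⟨h, hx⟩ => ⟨Or.inl h, hx⟩

lemma odeg_induced_of_good {E : Finset (A × A)} {B : Finset A} {f : A → A}
    (hfr : FreshLeaves E B f) (hBv : B ⊆ verts E) {v : A} (hv : v ∈ B)
    (hg : GoodPend E B v) :
    odeg (inducedBlobNet E B f) v = odeg (arcsIn E B) v + 1 := by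
  have hfvB : f v ∉ B := fun h => hfr.2 v hv (hBv h)
  have hnotin : (v, f v) ∉ (arcsIn E B).filter (fun p => p.1 = v) := by
    intro h
    exact hfvB (mem_arcsIn.1 (Finset.mem_filter.1 h).1).2.2
  have heq : (inducedBlobNet E B f).filter (fun p => p.1 = v) =
      insert (v, f v) ((arcsIn E B).filter (fun p => p.1 = v)) := by
    apply Finset.ext
    rintro ⟨x, y⟩
    simp only [Finset.mem_filter, Finset.mem_insert, mem_induced, Prod.mk.injEq]
    constructor
    · rintro ⟨h | ⟨hxB, hg', rfl⟩, hx⟩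
      · exact Or.inr ⟨h, hx⟩
      · exact Or.inl ⟨hx, by rw [show x = v from hx]⟩
    · rintro (⟨rfl, rfl⟩ | ⟨h, hx⟩)
      · exact ⟨Or.inr ⟨hv, hg, rfl⟩, rfl⟩
      · exact ⟨Or.inl h, hx⟩
  rw [odeg, heq, Finset.card_insert_of_notMem hnotin, odeg]

lemma ideg_induced_fresh {E : Finset (A × A)} {B : Finset A} {f : A → A}
    (hfr : FreshLeaves E B f) (hBv : B ⊆ verts E) {v : A} (hv : v ∈ B)
    (hg : GoodPend E B v) :
    ideg (inducedBlobNet E B f) (f v) = 1 := by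
  have heq : (inducedBlobNet E B f).filter (fun p => p.2 = f v) = {(v, f v)} := by
    apply Finset.ext
    rintro ⟨x, y⟩
    simp only [Finset.mem_filter, Finset.mem_singleton, mem_induced, Prod.mk.injEq]
    constructor
    · rintro ⟨h | ⟨hxB, hg', rfl⟩, hy⟩
      · exfalso
        have hyB : y ∈ B := (mem_arcsIn.1 h).2.2
        rw [show y = f v from hy] at hyB
        exact hfr.2 v hv (hBv hyB)
      · have hxv : x = v := hfr.1 hxB hv hy
        exact ⟨hxv, by rw [hxv]⟩
    · rintro ⟨rfl, rfl⟩
      exact ⟨Or.inr ⟨hv, hg, rfl⟩, rfl⟩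
  rw [ideg, heq, Finset.card_singleton]

end AuxInduced

section Dir1

lemma direction1 {E : Finset (A × A)} (hnet : IsDirBinNet E) (hTC : IsTreeChild E)
    {B : Finset A} {f : A → A} (hB : IsBlobD E B) (hfr : FreshLeaves E B f) :
    IsTreeChild (inducedBlobNet E B f) := by
  obtain ⟨hac, hroot, hclass⟩ := hnet
  have hBv : B ⊆ verts E := hB.1.1
  intro v hvN hodegN
  by_cases hvB : v ∈ B
  swap
  · exact absurd (odeg_induced_of_not_memB hvB) hodegN
  by_cases hvg : GoodPend E B v
  · refine ⟨f v, mem_induced.2 (Or.inr ⟨hvB, hvg, rfl⟩),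
      Or.inr ⟨ideg_induced_fresh hfr hBv hvB hvg, ?_⟩⟩
    exact odeg_induced_of_not_memB (fun h => hfr.2 v hvB (hBv h))
  · have hoB : odeg (arcsIn E B) v ≠ 0 := by
      rw [odeg_induced_of_not_good hvg] at hodegN; exact hodegN
    obtain ⟨d, hd⟩ := exists_out_of_odeg_ne_zero hoB
    have hdB : d ∈ B := (mem_arcsIn.1 hd).2.2
    have hdE : (v, d) ∈ E := (mem_arcsIn.1 hd).1
    have hvE : v ∈ verts E := hBv hvB
    have hodegE : odeg E v ≠ 0 := by
      have := odeg_pos_of_mem hdE; omega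
    obtain ⟨c, hcE, hcgood⟩ := hTC v hvE hodegE
    by_cases hcB : c ∈ B
    · -- the witness c works in the induced network
      have hcarc : (v, c) ∈ arcsIn E B := mem_arcsIn.2 ⟨hcE, hvB, hcB⟩
      have hiB : ideg (arcsIn E B) c = 1 := by
        have h1 : 0 < ideg (arcsIn E B) c := ideg_pos_of_mem hcarc
        have h2 : ideg (arcsIn E B) c ≤ ideg E c := ideg_arcsIn_le
        rcases hcgood with ⟨hc1, _⟩ | ⟨hc1, _⟩ <;> omega
      have hiN : ideg (inducedBlobNet E B f) c = 1 := by
        rw [ideg_induced_of_memB hfr hBv hcB]; exact hiB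
      refine ⟨c, mem_induced.2 (Or.inl hcarc), ?_⟩
      have hoBc : odeg (arcsIn E B) c ≤ odeg E c := odeg_arcsIn_le
      rcases hcgood with ⟨_, hc2⟩ | ⟨_, hc2⟩
      · rcases (show odeg (arcsIn E B) c = 0 ∨ odeg (arcsIn E B) c = 1 ∨
            odeg (arcsIn E B) c = 2 by omega) with h | h | h
        · refine Or.inr ⟨hiN, ?_⟩
          rw [odeg_induced_of_not_good ?_, h]
          rintro (⟨_, h2⟩ | ⟨h2, _⟩) <;> omega
        · refine Or.inl ⟨hiN, ?_⟩
          rw [odeg_induced_of_good hfr hBv hcB (Or.inl ⟨hiB, h⟩), h]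
        · refine Or.inl ⟨hiN, ?_⟩
          rw [odeg_induced_of_not_good ?_, h]
          rintro (⟨_, h2⟩ | ⟨h2, _⟩) <;> omega
      · have h : odeg (arcsIn E B) c = 0 := by omega
        refine Or.inr ⟨hiN, ?_⟩
        rw [odeg_induced_of_not_good ?_, h]
        rintro (⟨_, h2⟩ | ⟨h2, _⟩) <;> omega
    · exfalso
      have hdc : d ≠ c := fun h => hcB (h ▸ hdB)
      have main2 : odeg E v = 2 → ideg E v ≤ 1 → False := by
        intro ho hile1
        have hoB1 : odeg (arcsIn E B) v = 1 := by
          have hsub : (arcsIn E B).filter (fun p => p.1 = v) = {(v, d)} := by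
            apply Finset.ext
            rintro ⟨x, y⟩
            simp only [Finset.mem_filter, Finset.mem_singleton, Prod.mk.injEq]
            constructor
            · rintro ⟨hxy, rfl⟩
              refine ⟨rfl, ?_⟩
              have hyE : (x, y) ∈ E := (mem_arcsIn.1 hxy).1
              have hyB : y ∈ B := (mem_arcsIn.1 hxy).2.2
              rcases children_cases ho hcE hdE (Ne.symm hdc) hyE with rfl | rfl
              · exact absurd hyB hcB
              · rfl
            · rintro ⟨rfl, rfl⟩
              exact ⟨hd, rfl⟩
          rw [odeg, hsub, Finset.card_singleton]
        have hiB0 : ideg (arcsIn E B) v = 0 := by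
          have hile : ideg (arcsIn E B) v ≤ ideg E v := ideg_arcsIn_le
          have hne1 : ideg (arcsIn E B) v ≠ 1 := fun h => hvg (Or.inl ⟨h, hoB1⟩)
          omega
        obtain ⟨w₁, w₂, hw1B, hw2B, hne, ha1, ha2⟩ :=
          two_neighbors_in_bicon hB.1 hB.2.2 hvB
        have hw : ∀ w, w ∈ B → UAdj E v w → w = d := by
          intro w hwB hadj
          rcases hadj.2 with h' | h'
          · rcases children_cases ho hcE hdE (Ne.symm hdc) h' with rfl | rfl
            · exact absurd hwB hcB
            · rfl
          · exfalso
            have hmem : (w, v) ∈ arcsIn E B := mem_arcsIn.2 ⟨h', hwB, hvB⟩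
            have := ideg_pos_of_mem hmem
            omega
        exact hne ((hw w₁ hw1B ha1).trans (hw w₂ hw2B ha2).symm)
      rcases hclass v hvE with ⟨hi, ho⟩ | ⟨hi, ho⟩ | ⟨hi, ho⟩ | ⟨hi, ho⟩
      · exact main2 ho (by omega)
      · exact hodegE ho
      · exact main2 ho (by omega)
      · exact hdc (child_unique ho hdE hcE)

end Dir1

section Dir2

lemma child_retic_blob {E : Finset (A × A)}
    (hac : ∀ a : A, ¬ Relation.TransGen (Arc E) a a)
    (hroot : ∃! r : A, r ∈ verts E ∧ ideg E r = 0)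
    {a b : A} (hab : (a, b) ∈ E) (hb2 : ideg E b = 2) :
    ∃ B, IsBlobD E B ∧ a ∈ B ∧ b ∈ B := by
  obtain ⟨p, hpa, hpb⟩ := exists_other_parent hb2 hab
  obtain ⟨C, hC, haC, hpC, hbC⟩ := exists_bicon_cycle hac hroot hab hpb (Ne.symm hpa)
  have h3 : 3 ≤ C.card := by
    have hsub : ({a, p, b} : Finset A) ⊆ C := by
      intro x hx
      rcases Finset.mem_insert.1 hx with rfl | hx
      · exact haC
      · rcases Finset.mem_insert.1 hx with rfl | hx
        · exact hpC
        · rw [Finset.mem_singleton.1 hx]; exact hbC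
    have hcard3 : ({a, p, b} : Finset A).card = 3 := by
      rw [Finset.card_insert_of_notMem (by simp [Ne.symm hpa, arc_ne hac hab]),
        Finset.card_insert_of_notMem (by simp [arc_ne hac hpb]), Finset.card_singleton]
    rw [← hcard3]
    exact Finset.card_le_card hsub
  obtain ⟨B, hB, hCB⟩ := exists_blob_containing hC h3
  exact ⟨B, hB, hCB haC, hCB hbC⟩

lemma blob_profile {E : Finset (A × A)} (hnet : IsDirBinNet E)
    {B : Finset A} (hB : IsBlobD E B) {f : A → A} (hfr : FreshLeaves E B f)
    (hTC : IsTreeChild (inducedBlobNet E B f))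
    {a b : A} (haB : a ∈ B) (hbB : b ∈ B) (hab : (a, b) ∈ E)
    (hretic : ∀ c, (a, c) ∈ E → ideg E c = 2 ∧ odeg E c = 1) :
    ideg (arcsIn E B) a = 1 ∧ odeg (arcsIn E B) a = 1 := by
  obtain ⟨hac, hroot, hclass⟩ := hnet
  have hBv : B ⊆ verts E := hB.1.1
  have harc : (a, b) ∈ arcsIn E B := mem_arcsIn.2 ⟨hab, haB, hbB⟩
  have harcN : (a, b) ∈ inducedBlobNet E B f := mem_induced.2 (Or.inl harc)
  have haN : a ∈ verts (inducedBlobNet E B f) := mem_verts_fst harcN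
  have hoN : odeg (inducedBlobNet E B f) a ≠ 0 := by
    have := odeg_pos_of_mem harcN; omega
  obtain ⟨x, hxN, hxgood⟩ := hTC a haN hoN
  rcases mem_induced.1 hxN with hxarc | ⟨_, hga, _⟩
  · exfalso
    have hxE : (a, x) ∈ E := (mem_arcsIn.1 hxarc).1
    have hxB : x ∈ B := (mem_arcsIn.1 hxarc).2.2
    obtain ⟨hxi, hxo⟩ := hretic x hxE
    have hpar := blob_retic_parents hac hroot hB hxB hxi hxo
    obtain ⟨u, hu⟩ := exists_in_of_ideg_ne_zero (show ideg E x ≠ 0 by omega)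
    obtain ⟨p, hpu, hpx⟩ := exists_other_parent hxi hu
    have h2 : 2 ≤ ideg (arcsIn E B) x :=
      two_le_ideg hpu (mem_arcsIn.2 ⟨hpx, hpar p hpx, hxB⟩)
        (mem_arcsIn.2 ⟨hu, hpar u hu, hxB⟩)
    have hiNx : ideg (inducedBlobNet E B f) x = ideg (arcsIn E B) x :=
      ideg_induced_of_memB hfr hBv hxB
    rcases hxgood with ⟨h1, _⟩ | ⟨h1, _⟩ <;> omega
  · rcases hga with ⟨h1, h2⟩ | ⟨h1, h2⟩
    · exact ⟨h1, h2⟩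
    · exfalso
      have := odeg_pos_of_mem harc
      omega

lemma direction2 {E : Finset (A × A)} (hnet : IsDirBinNet E)
    (H : ∀ B : Finset A, IsBlobD E B →
      ∃ f : A → A, FreshLeaves E B f ∧ IsTreeChild (inducedBlobNet E B f)) :
    IsTreeChild E := by
  intro a haE hodegE
  by_contra hno
  push_neg at hno
  have hac := hnet.1
  have hroot := hnet.2.1
  have hclass := hnet.2.2
  have hretic : ∀ c, (a, c) ∈ E → ideg E c = 2 ∧ odeg E c = 1 := by
    intro c hc
    have hcv : c ∈ verts E := mem_verts_snd hc
    have hcpos : 0 < ideg E c := ideg_pos_of_mem hc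
    rcases hclass c hcv with ⟨h1, h2⟩ | ⟨h1, h2⟩ | ⟨h1, h2⟩ | ⟨h1, h2⟩
    · omega
    · exact absurd h2 ((hno c hc).2 h1)
    · exact absurd h2 ((hno c hc).1 h1)
    · exact ⟨h1, h2⟩
  rcases hclass a haE with ⟨hi, ho⟩ | ⟨hi, ho⟩ | ⟨hi, ho⟩ | ⟨hi, ho⟩
  · -- root with two reticulation children
    obtain ⟨b, c, hbc, hab, hac'⟩ := exists_two_children ho
    obtain ⟨B, hBblob, haB, hbB⟩ := child_retic_blob hac hroot hab (hretic b hab).1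
    obtain ⟨f, hfr, hTC⟩ := H B hBblob
    obtain ⟨hiB1, _⟩ := blob_profile ⟨hac, hroot, hclass⟩ hBblob hfr hTC haB hbB hab hretic
    have : ideg (arcsIn E B) a ≤ ideg E a := ideg_arcsIn_le
    omega
  · exact hodegE ho
  · -- tree vertex with two reticulation children
    obtain ⟨b, c, hbc, hab, hac'⟩ := exists_two_children ho
    obtain ⟨B, hBblob, haB, hbB⟩ := child_retic_blob hac hroot hab (hretic b hab).1
    obtain ⟨f, hfr, hTC⟩ := H B hBblob
    obtain ⟨hiB1, hoB1⟩ := blob_profile ⟨hac, hroot, hclass⟩ hBblob hfr hTC haB hbB hab hretic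
    obtain ⟨q, hq⟩ := exists_in_of_ideg_ne_zero (show ideg (arcsIn E B) a ≠ 0 by omega)
    have hqB : q ∈ B := (mem_arcsIn.1 hq).2.1
    have hqE : (q, a) ∈ E := (mem_arcsIn.1 hq).1
    have hcB : c ∉ B := by
      intro hcB
      have : 2 ≤ odeg (arcsIn E B) a :=
        two_le_odeg hbc (mem_arcsIn.2 ⟨hab, haB, hbB⟩) (mem_arcsIn.2 ⟨hac', haB, hcB⟩)
      omega
    obtain ⟨B', hB'blob, haB', hcB'⟩ := child_retic_blob hac hroot hac' (hretic c hac').1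
    obtain ⟨f', hfr', hTC'⟩ := H B' hB'blob
    obtain ⟨hiB1', hoB1'⟩ :=
      blob_profile ⟨hac, hroot, hclass⟩ hB'blob hfr' hTC' haB' hcB' hac' hretic
    obtain ⟨q', hq'⟩ := exists_in_of_ideg_ne_zero (show ideg (arcsIn E B') a ≠ 0 by omega)
    have hq'B : q' ∈ B' := (mem_arcsIn.1 hq').2.1
    have hq'E : (q', a) ∈ E := (mem_arcsIn.1 hq').1
    have hqq' : q' = q := parent_unique hi hq'E hqE
    subst hqq'
    have hunion : IsBiconnectedD E (B ∪ B') :=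
      bicon_union hBblob.1 hB'blob.1 haB haB' hqB hq'B (Ne.symm (arc_ne hac hqE))
    have heq : B = B ∪ B' := hBblob.2.1 _ hunion Finset.subset_union_left
    apply hcB
    rw [heq]
    exact Finset.mem_union_right _ hcB'
  · -- reticulation with a reticulation child
    obtain ⟨b, hab⟩ := exists_out_of_odeg_ne_zero hodegE
    obtain ⟨B, hBblob, haB, hbB⟩ := child_retic_blob hac hroot hab (hretic b hab).1
    obtain ⟨f, hfr, hTC⟩ := H B hBblob
    obtain ⟨hiB1, _⟩ := blob_profile ⟨hac, hroot, hclass⟩ hBblob hfr hTC haB hbB hab hretic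
    have hparA := blob_retic_parents hac hroot hBblob haB hi ho
    obtain ⟨u, hu⟩ := exists_in_of_ideg_ne_zero (show ideg E a ≠ 0 by omega)
    obtain ⟨p, hpu, hpa⟩ := exists_other_parent hi hu
    have h2 : 2 ≤ ideg (arcsIn E B) a :=
      two_le_ideg hpu (mem_arcsIn.2 ⟨hpa, hparA p hpa, haB⟩)
        (mem_arcsIn.2 ⟨hu, hparA u hu, haB⟩)
    omega

end Dir2

/-- The class of tree-child networks is blob-determined: a directed binary
network is tree-child iff the network induced by each of its blobs is
tree-child. -/
theorem treechild_blob_determined [Infinite A] (E : Finset (A × A))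
    (hnet : IsDirBinNet E) :
    (IsTreeChild E →
      ∀ (B : Finset A) (f : A → A), IsBlobD E B → FreshLeaves E B f →
        IsTreeChild (inducedBlobNet E B f)) ∧
    ((∀ B : Finset A, IsBlobD E B →
        ∃ f : A → A, FreshLeaves E B f ∧ IsTreeChild (inducedBlobNet E B f)) →
      IsTreeChild E) := by
  constructor
  · intro hTC B f hB hfr
    exact direction1 hnet hTC hB hfr
  · intro H
    exact direction2 hnet H
end
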